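/- arXiv:0812.4209 — 5 statements merged into one kernel-verified Lean document; each statement's English description precedes it below -/
import Mathlib

section
/- There exists an absolute constant C′ with the following property: for every C ≥ 0 and every even, twice continuously differentiable function g : ℝ → ℂ satisfying |g′(ζ)| ≤ C (1+|ζ|)^{−1} and |g″(ζ)| ≤ C (1+|ζ|)^{−2} for all ζ ∈ ℝ, the function F(t) = ∫_ℝ g″(ζ) e^{iζt} dζ (the integral converges absolutely) satisfies F(0) = 0 and |F(t)| ≤ C′ C |t| for all t ∈ ℝ. (This is the core estimate in the proof of Lemma 5.3(i) of the paper, with g playing the role of the Fourier transform of the distribution K and F(t) = −t² K(t).) -/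
open MeasureTheory Filter Topology

lemma aux_one_sub_cos_le_half_sq (u : ℝ) : 1 - Real.cos u ≤ u ^ 2 / 2 := by
  have h : Real.cos u = Real.cos (u / 2) ^ 2 - Real.sin (u / 2) ^ 2 := by
    rw [← Real.cos_two_mul']
    congr 1
    ring
  have h2 := Real.sin_sq_add_cos_sq (u / 2)
  have h3 : |Real.sin (u / 2)| ≤ |u / 2| := Real.abs_sin_le_abs
  nlinarith [sq_abs (Real.sin (u / 2)), sq_abs (u / 2), abs_nonneg (Real.sin (u / 2)),
    abs_nonneg (u / 2)]

lemma aux_cos_bound (u : ℝ) : |Real.cos u - 1| ≤ 3 * u ^ 2 / (1 + u ^ 2) := by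
  have h1 := aux_one_sub_cos_le_half_sq u
  have h2 := Real.cos_le_one u
  have h3 := Real.neg_one_le_cos u
  have h4 : (0:ℝ) < 1 + u ^ 2 := by positivity
  rw [abs_sub_comm, abs_of_nonneg (by linarith), le_div_iff₀ h4]
  rcases le_or_gt (u ^ 2) 4 with h | h
  · nlinarith
  · nlinarith

theorem stmt1 :
    ∃ C' : ℝ, 0 ≤ C' ∧ ∀ C : ℝ, 0 ≤ C → ∀ g : ℝ → ℂ,
      (∀ x : ℝ, g (-x) = g x) → ContDiff ℝ 2 g →
      (∀ ζ : ℝ, ‖deriv g ζ‖ ≤ C / (1 + |ζ|)) →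
      (∀ ζ : ℝ, ‖deriv (deriv g) ζ‖ ≤ C / (1 + |ζ|) ^ 2) →
      (∀ t : ℝ, Integrable (fun ζ : ℝ => deriv (deriv g) ζ * Complex.exp (Complex.I * ζ * t))) ∧
      (∫ ζ : ℝ, deriv (deriv g) ζ * Complex.exp (Complex.I * ζ * 0)) = 0 ∧
      ∀ t : ℝ, ‖∫ ζ : ℝ, deriv (deriv g) ζ * Complex.exp (Complex.I * ζ * t)‖ ≤ C' * C * |t| := by
  refine ⟨13, by norm_num, ?_⟩
  intro C hC g hgeven hg hg1 hg2
  set h := deriv (deriv g) with hh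
  -- smoothness facts
  have hg11 : ContDiff ℝ (1 + 1) g := by
    convert hg using 2; norm_num
  have hgd : ContDiff ℝ 1 (deriv g) := (contDiff_succ_iff_deriv.mp hg11).2.2
  have hgdiff : Differentiable ℝ (deriv g) := hgd.differentiable one_ne_zero
  have hcont : Continuous h := hgd.continuous_deriv le_rfl
  -- oddness / evenness
  have hodd : ∀ x : ℝ, deriv g (-x) = - deriv g x := by
    intro x
    have h1 : deriv (fun y : ℝ => g (-y)) x = - deriv g (-x) := deriv_comp_neg (f := g) x
    have h2 : (fun y : ℝ => g (-y)) = g := funext hgeven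
    rw [h2] at h1
    rw [h1, neg_neg]
  have heven : ∀ x : ℝ, h (-x) = h x := by
    intro x
    have h1 : deriv (fun y : ℝ => deriv g (-y)) x = - h (-x) := deriv_comp_neg (f := deriv g) x
    have h2 : (fun y : ℝ => deriv g (-y)) = fun y => -deriv g y := funext hodd
    rw [h2, deriv.fun_neg] at h1
    exact neg_injective h1.symm
  -- integrability
  have hbound : ∀ ζ : ℝ, ‖h ζ‖ ≤ C * (1 + ζ ^ 2)⁻¹ := by
    intro ζ
    refine (hg2 ζ).trans ?_
    rw [div_eq_mul_inv]
    have h1 : (1:ℝ) + ζ ^ 2 ≤ (1 + |ζ|) ^ 2 := by nlinarith [abs_nonneg ζ, sq_abs ζ]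
    gcongr
  have hint : Integrable (fun ζ : ℝ => C * (1 + ζ ^ 2)⁻¹) := integrable_inv_one_add_sq.const_mul C
  have hinth : Integrable h := hint.mono' hcont.aestronglyMeasurable (ae_of_all _ hbound)
  have hexp : ∀ t ζ : ℝ, ‖Complex.exp (Complex.I * ζ * t)‖ = 1 := by
    intro t ζ
    rw [Complex.norm_exp]
    norm_num [Complex.mul_re]
  have hintF : ∀ t : ℝ, Integrable (fun ζ : ℝ => h ζ * Complex.exp (Complex.I * ζ * t)) := by
    intro t
    refine hint.mono' ?_ (ae_of_all _ fun ζ => ?_)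
    · exact (hcont.mul (Complex.continuous_exp.comp (by continuity))).aestronglyMeasurable
    · rw [norm_mul, hexp t ζ, mul_one]; exact hbound ζ
  -- the integral of h is zero
  have hI0 : (∫ ζ : ℝ, h ζ) = 0 := by
    have h1 : Tendsto (fun R : ℝ => ∫ ζ in (-R)..R, h ζ) atTop (𝓝 (∫ ζ : ℝ, h ζ)) :=
      intervalIntegral_tendsto_integral hinth tendsto_neg_atTop_atBot tendsto_id
    have h2 : ∀ R : ℝ, (∫ ζ in (-R)..R, h ζ) = 2 * deriv g R := by
      intro R
      rw [hh, intervalIntegral.integral_deriv_eq_sub (fun x _ => hgdiff x)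
        ((hcont.intervalIntegrable _ _)), hodd R]
      ring
    have h3 : Tendsto (fun R : ℝ => deriv g R) atTop (𝓝 0) := by
      apply squeeze_zero_norm (fun R => hg1 R)
      exact Tendsto.div_atTop tendsto_const_nhds
        (tendsto_atTop_add_const_left _ 1 tendsto_abs_atTop_atTop)
    have h4 : Tendsto (fun R : ℝ => ∫ ζ in (-R)..R, h ζ) atTop (𝓝 0) := by
      simp only [h2]
      simpa using h3.const_mul (2:ℂ)
    exact tendsto_nhds_unique h1 h4
  have hF0 : (∫ ζ : ℝ, h ζ * Complex.exp (Complex.I * ζ * 0)) = 0 := by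
    simpa using hI0
  refine ⟨hintF, hF0, ?_⟩
  intro t
  rcases eq_or_ne t 0 with rfl | ht
  · simp only [Complex.ofReal_zero, hF0]
    simp
  -- reflection: the integral equals the cosine-minus-one integral
  have hexpc : Continuous fun ζ : ℝ => Complex.exp (-(Complex.I * ζ * t)) := by
    apply Complex.continuous_exp.comp
    continuity
  have hint2 : Integrable (fun ζ : ℝ => h ζ * Complex.exp (-(Complex.I * ζ * t))) := by
    refine hint.mono' (hcont.mul hexpc).aestronglyMeasurable (ae_of_all _ fun ζ => ?_)
    rw [norm_mul]
    have e : ‖Complex.exp (-(Complex.I * ζ * t))‖ = 1 := by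
      rw [Complex.norm_exp]
      norm_num [Complex.mul_re]
    rw [e, mul_one]
    exact hbound ζ
  have e1 : (∫ ζ : ℝ, h ζ * Complex.exp (Complex.I * ζ * t))
      = ∫ ζ : ℝ, h ζ * Complex.exp (-(Complex.I * ζ * t)) := by
    rw [← integral_neg_eq_self (fun ζ : ℝ => h ζ * Complex.exp (Complex.I * ζ * t)) volume]
    congr 1
    funext ζ
    rw [heven]
    congr 2
    push_cast
    ring
  have e3 : (2:ℂ) * (∫ ζ : ℝ, h ζ * Complex.exp (Complex.I * ζ * t))
      = ∫ ζ : ℝ, h ζ * (2 * ((Real.cos (ζ * t) : ℝ) : ℂ)) := by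
    calc (2:ℂ) * (∫ ζ : ℝ, h ζ * Complex.exp (Complex.I * ζ * t))
        = (∫ ζ : ℝ, h ζ * Complex.exp (Complex.I * ζ * t))
          + ∫ ζ : ℝ, h ζ * Complex.exp (-(Complex.I * ζ * t)) := by rw [← e1]; ring
      _ = ∫ ζ : ℝ, (h ζ * Complex.exp (Complex.I * ζ * t)
          + h ζ * Complex.exp (-(Complex.I * ζ * t))) := (integral_add (hintF t) hint2).symm
      _ = ∫ ζ : ℝ, h ζ * (2 * ((Real.cos (ζ * t) : ℝ) : ℂ)) := by
          congr 1
          funext ζ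
          rw [Complex.ofReal_cos, Complex.two_cos,
            show ((ζ * t : ℝ) : ℂ) * Complex.I = Complex.I * ζ * t by push_cast; ring,
            show -((ζ * t : ℝ) : ℂ) * Complex.I = -(Complex.I * ζ * t) by push_cast; ring]
          ring
  have hK : Integrable (fun ζ : ℝ => h ζ * ((Real.cos (ζ * t) - 1 : ℝ) : ℂ)) := by
    refine (hint.const_mul 2).mono' ?_ (ae_of_all _ fun ζ => ?_)
    · exact (hcont.mul (Complex.continuous_ofReal.comp ((Real.continuous_cos.comp (continuous_id.mul continuous_const)).sub continuous_const))).aestronglyMeasurable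
    · rw [norm_mul, Complex.norm_real ((Real.cos (ζ * t) - 1 : ℝ)), Real.norm_eq_abs]
      have h5 : |Real.cos (ζ * t) - 1| ≤ 2 := by
        have := Real.cos_le_one (ζ * t)
        have := Real.neg_one_le_cos (ζ * t)
        rw [abs_le]
        constructor <;> linarith
      calc ‖h ζ‖ * |Real.cos (ζ * t) - 1| ≤ (C * (1 + ζ ^ 2)⁻¹) * 2 :=
            mul_le_mul (hbound ζ) h5 (abs_nonneg _) (by positivity)
        _ = 2 * (C * (1 + ζ ^ 2)⁻¹) := by ring
  have hFK : (∫ ζ : ℝ, h ζ * Complex.exp (Complex.I * ζ * t))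
      = ∫ ζ : ℝ, h ζ * ((Real.cos (ζ * t) - 1 : ℝ) : ℂ) := by
    have e4 : (fun ζ : ℝ => h ζ * (2 * ((Real.cos (ζ * t) : ℝ) : ℂ)))
        = fun ζ : ℝ => (2:ℂ) * (h ζ * ((Real.cos (ζ * t) - 1 : ℝ) : ℂ)) + (2:ℂ) * h ζ := by
      funext ζ
      push_cast
      ring
    have e5 : (∫ ζ : ℝ, h ζ * (2 * ((Real.cos (ζ * t) : ℝ) : ℂ)))
        = 2 * ∫ ζ : ℝ, h ζ * ((Real.cos (ζ * t) - 1 : ℝ) : ℂ) := by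
      rw [e4, integral_add (hK.const_mul 2) (hinth.const_mul 2), integral_const_mul,
        integral_const_mul, hI0, mul_zero, add_zero]
    apply mul_left_cancel₀ (two_ne_zero' ℂ)
    rw [e3, e5]
  -- pointwise bound and conclusion
  have hGcont : Integrable (fun ζ : ℝ => 3 * C * t ^ 2 * (1 + (ζ * t) ^ 2)⁻¹) := by
    have : Integrable (fun ζ : ℝ => (1 + (ζ * t) ^ 2)⁻¹) :=
      integrable_inv_one_add_sq.comp_mul_right' ht
    exact this.const_mul _
  have hpt : ∀ ζ : ℝ, ‖h ζ * ((Real.cos (ζ * t) - 1 : ℝ) : ℂ)‖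
      ≤ 3 * C * t ^ 2 * (1 + (ζ * t) ^ 2)⁻¹ := by
    intro ζ
    rw [norm_mul, Complex.norm_real ((Real.cos (ζ * t) - 1 : ℝ)), Real.norm_eq_abs]
    have b1 : ‖h ζ‖ ≤ C / (1 + |ζ|) ^ 2 := hg2 ζ
    have b2 : |Real.cos (ζ * t) - 1| ≤ 3 * (ζ * t) ^ 2 / (1 + (ζ * t) ^ 2) := aux_cos_bound _
    have b3 : (0:ℝ) < (1 + |ζ|) ^ 2 := by positivity
    have b4 : (0:ℝ) < 1 + (ζ * t) ^ 2 := by positivity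
    have e6 : ζ ^ 2 ≤ (1 + |ζ|) ^ 2 := by nlinarith [abs_nonneg ζ, sq_abs ζ]
    calc ‖h ζ‖ * |Real.cos (ζ * t) - 1|
        ≤ (C / (1 + |ζ|) ^ 2) * (3 * (ζ * t) ^ 2 / (1 + (ζ * t) ^ 2)) :=
          mul_le_mul b1 b2 (abs_nonneg _) (by positivity)
      _ ≤ 3 * C * t ^ 2 * (1 + (ζ * t) ^ 2)⁻¹ := by
          rw [div_mul_div_comm, ← div_eq_mul_inv, div_le_div_iff₀ (by positivity) b4]
          nlinarith [mul_le_mul_of_nonneg_left e6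
            (show (0:ℝ) ≤ 3 * C * t ^ 2 * (1 + (ζ * t) ^ 2) by positivity)]
  have hGval : (∫ ζ : ℝ, 3 * C * t ^ 2 * (1 + (ζ * t) ^ 2)⁻¹)
      = 3 * C * t ^ 2 * (|t|⁻¹ * Real.pi) := by
    rw [integral_const_mul]
    congr 1
    have e7 := MeasureTheory.Measure.integral_comp_mul_right (fun u : ℝ => (1 + u ^ 2)⁻¹) t
    try simp only at e7
    rw [e7, integral_univ_inv_one_add_sq, smul_eq_mul, abs_inv]
  have ht2 : t ^ 2 * |t|⁻¹ = |t| := by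
    have : |t| ≠ 0 := abs_ne_zero.mpr ht
    rw [← sq_abs, sq]
    field_simp
  calc ‖∫ ζ : ℝ, h ζ * Complex.exp (Complex.I * ζ * t)‖
      = ‖∫ ζ : ℝ, h ζ * ((Real.cos (ζ * t) - 1 : ℝ) : ℂ)‖ := by rw [hFK]
    _ ≤ ∫ ζ : ℝ, 3 * C * t ^ 2 * (1 + (ζ * t) ^ 2)⁻¹ :=
        norm_integral_le_of_norm_le hGcont (ae_of_all _ hpt)
    _ = 3 * C * t ^ 2 * (|t|⁻¹ * Real.pi) := hGval
    _ ≤ 13 * C * |t| := by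
        have e8 : 3 * C * t ^ 2 * (|t|⁻¹ * Real.pi) = 3 * Real.pi * (C * (t ^ 2 * |t|⁻¹)) := by
          ring
        rw [e8, ht2]
        have h9 : 3 * Real.pi ≤ 13 := by nlinarith [Real.pi_le_four]
        nlinarith [mul_nonneg hC (abs_nonneg t), h9]
end

section
/- Let (M,d) be a metric space in which every pair of points is joined by a minimizing geodesic, and let μ be a Borel measure on M such that every ball has finite positive measure, μ is locally doubling (for every s > 0 there exists D_s such that μ(B(x,2r)) ≤ D_s μ(B(x,r)) for all x ∈ M and 0 < r ≤ s), and M satisfies the uniform ball size condition (for every r > 0, inf_{x ∈ M} μ(B(x,r)) > 0 and sup_{x ∈ M} μ(B(x,r)) < ∞). Then there exists a constant C, depending only on (M,d,μ), such that for every H¹-atom a supported in a ball B of radius r_B > 1 one has ‖a‖_{H¹} ≤ C r_B, where ‖·‖_{H¹} is the atomic Hardy norm at scale 1. (This is Lemma 5.5 of the paper: the economical decomposition of atoms with large support.) -/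
open MeasureTheory Filter
open scoped ENNReal

noncomputable section
open Metric

/-- An `H¹`-atom: a function in `L¹(μ) ∩ L²(μ)` supported in the ball `B(x,r)`, with vanishing
integral and `‖a‖₂ ≤ μ(B(x,r))^{-1/2}`. -/
def IsH1Atom {M : Type*} [MetricSpace M] [MeasurableSpace M]
    (μ : Measure M) (a : M → ℂ) (x : M) (r : ℝ) : Prop :=
  Integrable a μ ∧ AEStronglyMeasurable a μ ∧
    eLpNorm a 2 μ ≤ μ (Metric.ball x r) ^ (-(1 / 2) : ℝ) ∧
    (∀ y, y ∉ Metric.ball x r → a y = 0) ∧ (∫ y, a y ∂μ) = 0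

/-- The atomic Hardy norm at scale 1: the infimum of `Σ |λ_k|` over all decompositions
`g = Σ λ_k a_k` (convergence in `L¹(μ)`) into `H¹`-atoms supported in balls of radius at
most 1.  The infimum of the empty set (in `ℝ≥0∞`) is `+∞`. -/
def hardyNorm1 {M : Type*} [MetricSpace M] [MeasurableSpace M]
    (μ : Measure M) (g : M → ℂ) : ℝ≥0∞ :=
  sInf { S : ℝ≥0∞ | ∃ (l : ℕ → ℝ) (A : ℕ → M → ℂ),
    (∀ n, ∃ x r, 0 < r ∧ r ≤ 1 ∧ IsH1Atom μ (A n) x r) ∧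
    Summable (fun n => |l n|) ∧
    Tendsto (fun N => eLpNorm (fun y => g y - ∑ n ∈ Finset.range N, l n * A n y) 1 μ)
      atTop (nhds 0) ∧
    S = ∑' n, ENNReal.ofReal |l n| }


section Helpers
set_option linter.unusedSectionVars false

lemma list_range_sum {β : Type*} [AddCommMonoid β] (n : ℕ) (f : ℕ → β) :
    ((List.range n).map f).sum = ∑ i ∈ Finset.range n, f i := by
  induction n with
  | zero => simp
  | succ n ih =>
      rw [List.range_succ, List.map_append, List.sum_append, Finset.sum_range_succ, ih]
      simp

lemma list_flat_sum {α β : Type*} [AddCommMonoid β] (n K : ℕ) (F : ℕ → ℕ → α) (h : α → β) :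
    (((List.range n).flatMap (fun i => (List.range K).map (F i))).map h).sum
      = ∑ i ∈ Finset.range n, ∑ j ∈ Finset.range K, h (F i j) := by
  induction n with
  | zero => simp
  | succ n ih =>
      rw [List.range_succ, List.flatMap_append, List.map_append, List.sum_append, ih,
        Finset.sum_range_succ]
      simp [List.map_map, Function.comp, list_range_sum]

lemma list_flat_mem {α : Type*} (n K : ℕ) (F : ℕ → ℕ → α) (x : α)
    (hx : x ∈ (List.range n).flatMap (fun i => (List.range K).map (F i))) :
    ∃ i < n, ∃ j < K, x = F i j := by
  simp only [List.mem_flatMap, List.mem_map, List.mem_range] at hx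
  obtain ⟨i, hi, j, hj, rfl⟩ := hx
  exact ⟨i, hi, j, hj, rfl⟩

lemma rpow_half_mul_inv {b : ℝ≥0∞} (hb0 : b ≠ 0) (hbT : b ≠ ⊤) :
    b ^ (1/2 : ℝ) * b ^ (-(1/2) : ℝ) = 1 := by
  rw [← ENNReal.rpow_add _ _ hb0 hbT]
  norm_num

lemma one_le_aux {v b : ℝ≥0∞} (hb0 : b ≠ 0) (hbT : b ≠ ⊤) (hbv : b ≤ v) :
    (1 : ℝ≥0∞) ≤ v ^ (1/2 : ℝ) * b ^ (-(1/2) : ℝ) := by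
  rw [← rpow_half_mul_inv hb0 hbT]
  exact mul_le_mul_left (ENNReal.rpow_le_rpow hbv (by norm_num)) _

lemma neg_half_antitone {x y : ℝ≥0∞} (hxy : x ≤ y) : y ^ (-(1/2) : ℝ) ≤ x ^ (-(1/2) : ℝ) := by
  rw [ENNReal.rpow_neg, ENNReal.rpow_neg]
  exact ENNReal.inv_le_inv.2 (ENNReal.rpow_le_rpow hxy (by norm_num))

lemma holder_lintegral {M : Type*} [MeasurableSpace M] (μ : Measure M) (a : M → ℂ)
    (ha : AEStronglyMeasurable a μ) (s : Set M) (hs : MeasurableSet s)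
    (hzero : ∀ y, y ∉ s → a y = 0) :
    ∫⁻ y, (‖a y‖₊ : ℝ≥0∞) ∂μ ≤ eLpNorm a 2 μ * μ s ^ (1/2 : ℝ) := by
  have hpq : Real.HolderConjugate 2 2 := Real.HolderConjugate.two_two
  have hf : AEMeasurable (fun y => (‖a y‖₊ : ℝ≥0∞)) μ := ha.enorm
  have hg : AEMeasurable (s.indicator (fun _ => (1:ℝ≥0∞))) μ :=
    (measurable_const.indicator hs).aemeasurable
  have key := ENNReal.lintegral_mul_le_Lp_mul_Lq μ hpq hf hg
  have e0 : ∀ y, (‖a y‖₊ : ℝ≥0∞) * s.indicator (fun _ => (1:ℝ≥0∞)) y = (‖a y‖₊ : ℝ≥0∞) := by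
    intro y
    by_cases hy : y ∈ s
    · simp [Set.indicator_of_mem hy]
    · simp [Set.indicator_of_notMem hy, hzero y hy]
  have e1 : ∫⁻ y, ((fun y => (‖a y‖₊ : ℝ≥0∞)) * s.indicator (fun _ => (1:ℝ≥0∞))) y ∂μ
      = ∫⁻ y, (‖a y‖₊ : ℝ≥0∞) ∂μ := by
    congr 1; funext y; exact e0 y
  have e2 : (∫⁻ y, s.indicator (fun _ => (1:ℝ≥0∞)) y ^ (2:ℝ) ∂μ) ^ (1/(2:ℝ)) = μ s ^ (1/2:ℝ) := by
    have : ∀ y, s.indicator (fun _ => (1:ℝ≥0∞)) y ^ (2:ℝ) = s.indicator (fun _ => (1:ℝ≥0∞)) y := by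
      intro y
      by_cases hy : y ∈ s <;>
        simp [Set.indicator_of_mem, Set.indicator_of_notMem, hy,
          ENNReal.zero_rpow_of_pos (by norm_num : (0:ℝ) < 2)]
    simp_rw [this]
    rw [lintegral_indicator hs]
    simp
  have e3 : (∫⁻ y, (‖a y‖₊ : ℝ≥0∞) ^ (2:ℝ) ∂μ) ^ (1/(2:ℝ)) = eLpNorm a 2 μ := by
    rw [eLpNorm_eq_lintegral_rpow_enorm_toReal two_ne_zero ENNReal.ofNat_ne_top]
    norm_num; rfl
  rw [e1, e2, e3] at key
  exact key

lemma sum_rpow_half_le (s : Finset ℕ) (u : ℕ → ℝ≥0∞) :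
    ∑ i ∈ s, u i ^ (1/2 : ℝ) ≤ (s.card : ℝ≥0∞) ^ (1/2 : ℝ) * (∑ i ∈ s, u i) ^ (1/2 : ℝ) := by
  classical
  set f : ℕ → ℝ≥0∞ := fun i => if i ∈ s then u i ^ (1/2 : ℝ) else 0 with hf
  set g : ℕ → ℝ≥0∞ := fun i => if i ∈ s then 1 else 0 with hg
  have hpq : Real.HolderConjugate 2 2 := Real.HolderConjugate.two_two
  have hmf : AEMeasurable f Measure.count := (measurable_from_top (f := f)).aemeasurable
  have hmg : AEMeasurable g Measure.count := (measurable_from_top (f := g)).aemeasurable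
  have key := ENNReal.lintegral_mul_le_Lp_mul_Lq Measure.count hpq hmf hmg
  have e1 : ∫⁻ i, (f * g) i ∂Measure.count = ∑ i ∈ s, u i ^ (1/2 : ℝ) := by
    rw [lintegral_count, tsum_eq_sum (s := s) (fun i hi => by simp [hf, hg, hi])]
    exact Finset.sum_congr rfl fun i hi => by simp [hf, hg, hi]
  have e2 : ∫⁻ i, f i ^ (2:ℝ) ∂Measure.count = ∑ i ∈ s, u i := by
    rw [lintegral_count, tsum_eq_sum (s := s)
      (fun i hi => by simp [hf, hi, ENNReal.zero_rpow_of_pos (by norm_num : (0:ℝ) < 2)])]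
    refine Finset.sum_congr rfl fun i hi => ?_
    rw [hf]
    simp only [hi, if_pos]
    rw [← ENNReal.rpow_mul]
    norm_num
  have e3 : ∫⁻ i, g i ^ (2:ℝ) ∂Measure.count = (s.card : ℝ≥0∞) := by
    rw [lintegral_count, tsum_eq_sum (s := s)
      (fun i hi => by simp [hg, hi, ENNReal.zero_rpow_of_pos (by norm_num : (0:ℝ) < 2)])]
    rw [Finset.card_eq_sum_ones s]
    push_cast
    exact Finset.sum_congr rfl fun i hi => by simp [hg, hi]
  rw [e1, e2, e3] at key
  calc ∑ i ∈ s, u i ^ (1/2 : ℝ)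
      ≤ (∑ i ∈ s, u i) ^ (1/(2:ℝ)) * (s.card : ℝ≥0∞) ^ (1/(2:ℝ)) := key
    _ = (s.card : ℝ≥0∞) ^ (1/2 : ℝ) * (∑ i ∈ s, u i) ^ (1/2 : ℝ) := mul_comm _ _

variable {M : Type*} [MetricSpace M] [MeasurableSpace M] [BorelSpace M]

def bump (μ : Measure M) (p : M) : M → ℂ :=
  (ball p (1/2)).indicator (fun _ => (((μ (ball p (1/2))).toReal : ℂ))⁻¹)

section bump
variable (μ : Measure M) (p : M) (h0 : 0 < μ (ball p (1/2))) (hT : μ (ball p (1/2)) < ⊤)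

lemma bump_meas : StronglyMeasurable (bump μ p) :=
  stronglyMeasurable_const.indicator measurableSet_ball

lemma bump_zero_outside : ∀ y, y ∉ ball p (1/2) → bump μ p y = 0 := fun y hy =>
  Set.indicator_of_notMem hy _

include hT in
lemma bump_integrable : Integrable (bump μ p) μ := by
  rw [bump, integrable_indicator_iff measurableSet_ball]
  exact integrableOn_const hT.ne

include h0 hT in
lemma bump_integral : ∫ y, bump μ p y ∂μ = 1 := by
  rw [bump, integral_indicator measurableSet_ball, setIntegral_const]
  rw [Complex.real_smul, measureReal_def, mul_inv_cancel₀]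
  exact_mod_cast (ENNReal.toReal_pos h0.ne' hT.ne).ne'

include h0 hT in
lemma bump_eLpNorm : eLpNorm (bump μ p) 2 μ = μ (ball p (1/2)) ^ (-(1/2) : ℝ) := by
  rw [bump, eLpNorm_indicator_const measurableSet_ball two_ne_zero ENNReal.ofNat_ne_top]
  have htr : ENNReal.toReal 2 = 2 := rfl
  have hnn : (‖(((μ (ball p (1/2))).toReal : ℂ))⁻¹‖₊ : ℝ≥0∞) = (μ (ball p (1/2)))⁻¹ := by
    rw [← enorm_eq_nnnorm, ← ofReal_norm, norm_inv, Complex.norm_real, Real.norm_eq_abs,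
      abs_of_pos (ENNReal.toReal_pos h0.ne' hT.ne),
      ENNReal.ofReal_inv_of_pos (ENNReal.toReal_pos h0.ne' hT.ne),
      ENNReal.ofReal_toReal hT.ne]
  rw [enorm_eq_nnnorm, hnn, htr]
  rw [← ENNReal.rpow_neg_one, ← ENNReal.rpow_add _ _ h0.ne' hT.ne]
  norm_num
end bump


variable {M : Type*} [MetricSpace M] [MeasurableSpace M] [BorelSpace M]

lemma isH1Atom_zero (μ : Measure M) (x : M) : IsH1Atom μ (0 : M → ℂ) x 1 := by
  refine ⟨integrable_zero _ _ _, aestronglyMeasurable_zero, ?_, fun y _ => rfl, by simp⟩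
  simp

lemma exists_atom_scale (μ : Measure M) (g : M → ℂ) (p : M) (c : ℝ) (hc : 0 ≤ c)
    (hint : Integrable g μ)
    (hsupp : ∀ y, y ∉ ball p 1 → g y = 0)
    (hmean : ∫ y, g y ∂μ = 0)
    (hnorm : eLpNorm g 2 μ ≤ ENNReal.ofReal c * μ (ball p 1) ^ (-(1/2) : ℝ)) :
    ∃ A : M → ℂ, IsH1Atom μ A p 1 ∧ ∀ᵐ y ∂μ, g y = (c : ℂ) * A y := by
  rcases eq_or_lt_of_le hc with h0 | hcpos
  · refine ⟨0, isH1Atom_zero μ p, ?_⟩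
    have : eLpNorm g 2 μ = 0 := by
      refine le_antisymm ?_ zero_le
      simpa [← h0] using hnorm
    have hg0 : g =ᵐ[μ] 0 := (eLpNorm_eq_zero_iff hint.1 (by norm_num)).1 this
    filter_upwards [hg0] with y hy
    simp [hy]
  · refine ⟨fun y => (c : ℂ)⁻¹ * g y, ⟨?_, ?_, ?_, ?_, ?_⟩, ?_⟩
    · exact hint.const_mul _
    · exact (hint.1.const_mul _)
    · have h1 : eLpNorm (fun y => (c : ℂ)⁻¹ * g y) 2 μ
          = ‖(c : ℂ)⁻¹‖₊ * eLpNorm g 2 μ := by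
        exact eLpNorm_const_smul ((c : ℂ)⁻¹) g (μ := μ) (p := 2)
      rw [h1]
      have hcne : ENNReal.ofReal c ≠ 0 := by simp [hcpos]
      have hnn : (‖(c : ℂ)⁻¹‖₊ : ℝ≥0∞) = (ENNReal.ofReal c)⁻¹ := by
        rw [← enorm_eq_nnnorm, ← ofReal_norm, ← ENNReal.ofReal_inv_of_pos hcpos]
        congr 1
        rw [norm_inv, Complex.norm_real, Real.norm_eq_abs, abs_of_pos hcpos]
      rw [hnn]
      calc (ENNReal.ofReal c)⁻¹ * eLpNorm g 2 μ
          ≤ (ENNReal.ofReal c)⁻¹ * (ENNReal.ofReal c * μ (ball p 1) ^ (-(1/2) : ℝ)) :=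
            mul_le_mul_right hnorm _
        _ = μ (ball p 1) ^ (-(1/2) : ℝ) := by
            rw [← mul_assoc, ENNReal.inv_mul_cancel hcne ENNReal.ofReal_ne_top, one_mul]
    · intro y hy; simp [hsupp y hy]
    · rw [integral_const_mul, hmean, mul_zero]
    · refine Eventually.of_forall fun y => ?_
      rw [← mul_assoc, mul_inv_cancel₀ (by exact_mod_cast hcpos.ne'), one_mul]

lemma list_sum_eq_range {α β : Type*} [AddCommMonoid β] (L : List α) (d : α) (f : α → β) :
    (L.map f).sum = ∑ n ∈ Finset.range L.length, f (L.getD n d) := by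
  induction L with
  | nil => simp
  | cons a L ih =>
      rw [List.map_cons, List.sum_cons, List.length_cons, Finset.sum_range_succ']
      simp only [List.getD_cons_succ, List.getD_cons_zero]
      rw [ih, add_comm]

lemma hardy_le_list [Nonempty M] (μ : Measure M) (g : M → ℂ) (L : List (ℝ × (M → ℂ)))
    (hA : ∀ p ∈ L, ∃ x r, 0 < r ∧ r ≤ 1 ∧ IsH1Atom μ p.2 x r)
    (hsum : ∀ᵐ y ∂μ, g y = (L.map (fun p => (p.1 : ℂ) * p.2 y)).sum) :
    hardyNorm1 μ g ≤ (L.map (fun p => ENNReal.ofReal |p.1|)).sum := by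
  classical
  set d : ℝ × (M → ℂ) := (0, 0) with hd
  set l : ℕ → ℝ := fun n => (L.getD n d).1 with hl
  set A : ℕ → M → ℂ := fun n => (L.getD n d).2 with hA'
  have hgetD : ∀ n, n ≥ L.length → L.getD n d = d := fun n hn =>
    List.getD_eq_default _ _ hn
  have hzero : ∀ n, n ≥ L.length → l n = 0 := fun n hn => by
    show (L.getD n d).1 = 0
    rw [hgetD n hn]
  have hmem : ∀ n, n < L.length → L.getD n d ∈ L := fun n hn => by
    rw [List.getD_eq_getElem L d hn]; exact List.getElem_mem _
  have key : hardyNorm1 μ g ≤ ∑' n, ENNReal.ofReal |l n| := by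
    refine sInf_le ⟨l, A, ?_, ?_, ?_, rfl⟩
    · intro n
      by_cases hn : n < L.length
      · exact hA _ (hmem n hn)
      · refine ⟨Classical.arbitrary M, 1, one_pos, le_refl _, ?_⟩
        have : A n = (0 : M → ℂ) := by
          show (L.getD n d).2 = 0
          rw [hgetD n (not_lt.1 hn)]
        rw [this]; exact isH1Atom_zero μ _
    · apply summable_of_ne_finset_zero (s := Finset.range L.length)
      intro n hn
      simp only [Finset.mem_range, not_lt] at hn
      simp [hzero n hn]
    · have hev : ∀ᶠ N in atTop,
          eLpNorm (fun y => g y - ∑ n ∈ Finset.range N, l n * A n y) 1 μ = 0 := by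
        filter_upwards [eventually_ge_atTop L.length] with N hN
        have hEq : ∀ᵐ y ∂μ, (fun y => g y - ∑ n ∈ Finset.range N, l n * A n y) y = 0 := by
          filter_upwards [hsum] with y hy
          have : ∑ n ∈ Finset.range N, (l n : ℂ) * A n y
              = ∑ n ∈ Finset.range L.length, (l n : ℂ) * A n y := by
            refine (Finset.sum_subset (Finset.range_subset_range.2 hN) ?_).symm
            intro n _ hn
            simp only [Finset.mem_range, not_lt] at hn
            have h1 : l n = 0 := hzero n hn
            rw [h1]
            simp
          rw [this, hy, list_sum_eq_range L d (fun p => (p.1 : ℂ) * p.2 y)]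
          simp [hl, hA', sub_eq_zero]
        rw [eLpNorm_congr_ae hEq, eLpNorm_zero']
      exact tendsto_const_nhds.congr' (by filter_upwards [hev] with N h; exact h.symm)
  refine key.trans (le_of_eq ?_)
  rw [tsum_eq_sum (s := Finset.range L.length)
      (fun n hn => by simp [hzero n (not_lt.1 (by simpa using hn))]),
      list_sum_eq_range L d (fun p => ENNReal.ofReal |p.1|)]

lemma exists_maximal_net (μ : Measure M) (x₀ : M) (r : ℝ) (hr : 0 < r)
    (hfin : μ (ball x₀ (r + 1/2)) < ⊤) (ch : ℝ≥0∞) (hch0 : 0 < ch)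
    (hch : ∀ p : M, ch ≤ μ (ball p (1/2))) :
    ∃ S : Finset M, (↑S : Set M) ⊆ ball x₀ r ∧
      (∀ p ∈ S, ∀ q ∈ S, p ≠ q → 1 ≤ dist p q) ∧
      ∀ y ∈ ball x₀ r, ∃ p ∈ S, dist y p < 1 := by
  classical
  set 𝒮 : Set (Finset M) := {S | (↑S : Set M) ⊆ ball x₀ r ∧
    ∀ p ∈ S, ∀ q ∈ S, p ≠ q → 1 ≤ dist p q} with h𝒮
  have hdisj : ∀ S ∈ 𝒮, (↑S : Set M).PairwiseDisjoint (fun p => ball p (1/2)) := by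
    intro S hS p hp q hq hpq
    apply Metric.ball_disjoint_ball
    calc (1/2 : ℝ) + 1/2 = 1 := by norm_num
    _ ≤ dist p q := hS.2 p hp q hq hpq
  have hcard : ∀ S ∈ 𝒮, (S.card : ℝ≥0∞) * ch ≤ μ (ball x₀ (r + 1/2)) := by
    intro S hS
    have hsub : (⋃ p ∈ S, ball p (1/2)) ⊆ ball x₀ (r + 1/2) := by
      intro z hz
      simp only [Set.mem_iUnion] at hz
      obtain ⟨p, hp, hz⟩ := hz
      have : dist p x₀ < r := hS.1 hp
      calc dist z x₀ ≤ dist z p + dist p x₀ := dist_triangle _ _ _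
      _ < 1/2 + r := by
          have := mem_ball.1 hz
          linarith
      _ = r + 1/2 := by ring
    calc (S.card : ℝ≥0∞) * ch = ∑ p ∈ S, ch := by
          rw [Finset.sum_const, nsmul_eq_mul]
      _ ≤ ∑ p ∈ S, μ (ball p (1/2)) := Finset.sum_le_sum fun p _ => hch p
      _ = μ (⋃ p ∈ S, ball p (1/2)) :=
          (measure_biUnion_finset (hdisj S hS) (fun p _ => measurableSet_ball)).symm
      _ ≤ μ (ball x₀ (r + 1/2)) := measure_mono hsub
  have hbdd : ∀ S ∈ 𝒮, S.card ≤ ⌊(μ (ball x₀ (r + 1/2)) / ch).toReal⌋₊ := by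
    intro S hS
    have h1 : (S.card : ℝ≥0∞) ≤ μ (ball x₀ (r + 1/2)) / ch :=
      (ENNReal.le_div_iff_mul_le (Or.inl hch0.ne') (Or.inl (hch x₀ |>.trans_lt (lt_of_le_of_lt (measure_mono (ball_subset_ball (by linarith : (1/2:ℝ) ≤ r + 1/2))) hfin)).ne)).2 (hcard S hS)
    have h2 : μ (ball x₀ (r + 1/2)) / ch ≠ ⊤ :=
      (ENNReal.div_lt_top hfin.ne hch0.ne').ne
    refine Nat.le_floor ?_
    have := ENNReal.toReal_mono h2 h1
    simpa using this
  -- pick a member of 𝒮 of maximal cardinality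
  have hne : (Finset.card '' 𝒮).Nonempty := ⟨0, ⟨∅, ⟨by simp, by simp⟩, rfl⟩⟩
  have hbdd' : BddAbove (Finset.card '' 𝒮) := by
    refine ⟨⌊(μ (ball x₀ (r + 1/2)) / ch).toReal⌋₊, ?_⟩
    rintro n ⟨S, hS, rfl⟩
    exact hbdd S hS
  obtain ⟨S, hS, hScard⟩ := Nat.sSup_mem hne hbdd'
  refine ⟨S, hS.1, hS.2, ?_⟩
  by_contra hcov
  push_neg at hcov
  obtain ⟨y, hy, hyfar⟩ := hcov
  have hynotS : y ∉ S := fun hyS => by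
    have := hyfar y hyS
    rw [dist_self] at this
    norm_num at this
  have hT : insert y S ∈ 𝒮 := by
    constructor
    · intro z hz
      rcases Finset.mem_insert.1 hz with rfl | hz
      · exact hy
      · exact hS.1 hz
    · intro p hp q hq hpq
      rcases Finset.mem_insert.1 hp with hp1 | hp2 <;> rcases Finset.mem_insert.1 hq with hq1 | hq2
      · exact absurd (hp1.trans hq1.symm) hpq
      · rw [hp1]; exact hyfar q hq2
      · rw [hq1, dist_comm]; exact hyfar p hp2
      · exact hS.2 p hp2 q hq2 hpq
  have : (insert y S).card ≤ sSup (Finset.card '' 𝒮) :=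
    le_csSup hbdd' ⟨_, hT, rfl⟩
  rw [Finset.card_insert_of_notMem hynotS, hScard] at this
  omega

end Helpers

theorem stmt3 {M : Type*} [MetricSpace M] [MeasurableSpace M] [BorelSpace M]
    (μ : Measure M)
    -- every pair of points is joined by a minimizing geodesic
    (hGeo : ∀ x y : M, ∃ γ : ℝ → M, γ 0 = x ∧ γ (dist x y) = y ∧
      ∀ s ∈ Set.Icc (0 : ℝ) (dist x y), ∀ t ∈ Set.Icc (0 : ℝ) (dist x y),
        dist (γ s) (γ t) = |s - t|)
    -- every ball has finite positive measure
    (hpos : ∀ (x : M) (r : ℝ), 0 < r → 0 < μ (Metric.ball x r))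
    (hfin : ∀ (x : M) (r : ℝ), 0 < r → μ (Metric.ball x r) < ⊤)
    -- local doubling property
    (hloc : ∀ s : ℝ, 0 < s → ∃ D : ℝ≥0∞, D < ⊤ ∧ ∀ (x : M) (r : ℝ), 0 < r → r ≤ s →
      μ (Metric.ball x (2 * r)) ≤ D * μ (Metric.ball x r))
    -- uniform ball size condition
    (hinf : ∀ r : ℝ, 0 < r → 0 < ⨅ x : M, μ (Metric.ball x r))
    (hsup : ∀ r : ℝ, 0 < r → (⨆ x : M, μ (Metric.ball x r)) < ⊤) :
    ∃ C : ℝ≥0∞, C < ⊤ ∧ ∀ (a : M → ℂ) (x : M) (r : ℝ), 1 < r →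
      IsH1Atom μ a x r → hardyNorm1 μ a ≤ C * ENNReal.ofReal r := by
  rcases isEmpty_or_nonempty M with hM | hM
  · exact ⟨1, ENNReal.one_lt_top, fun a x r hr ha => (IsEmpty.false x).elim⟩
  classical
  -- constants
  set Vh : ℝ≥0∞ := ⨆ x : M, μ (ball x 1) with hVhdef
  set ch : ℝ≥0∞ := ⨅ x : M, μ (ball x (1/2)) with hchdef
  set cq : ℝ≥0∞ := ⨅ x : M, μ (ball x (1/4)) with hcqdef
  have hVhT : Vh ≠ ⊤ := (hsup 1 one_pos).ne
  have hVh : ∀ p : M, μ (ball p 1) ≤ Vh := fun p => le_iSup (fun x => μ (ball x 1)) p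
  have hch0 : ch ≠ 0 := (hinf (1/2) (by norm_num)).ne'
  have hch : ∀ p : M, ch ≤ μ (ball p (1/2)) := fun p => iInf_le _ p
  have hchT : ch ≠ ⊤ :=
    ((hch (Classical.arbitrary M)).trans_lt (hfin _ _ (by norm_num))).ne
  have hcq0 : cq ≠ 0 := (hinf (1/4) (by norm_num)).ne'
  have hcq : ∀ p : M, cq ≤ μ (ball p (1/4)) := fun p => iInf_le _ p
  have hcqT : cq ≠ ⊤ :=
    ((hcq (Classical.arbitrary M)).trans_lt (hfin _ _ (by norm_num))).ne
  set VhH : ℝ≥0∞ := Vh ^ (1/2 : ℝ) with hVhHdef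
  set chI : ℝ≥0∞ := ch ^ (-(1/2) : ℝ) with hchIdef
  set cqI : ℝ≥0∞ := cq ^ (-(1/2) : ℝ) with hcqIdef
  set κ : ℝ≥0∞ := 2 * chI * VhH with hκdef
  have hVhHT : VhH ≠ ⊤ := ENNReal.rpow_ne_top_of_nonneg (by norm_num) hVhT
  have hchIT : chI ≠ ⊤ := by
    rw [hchIdef, ENNReal.rpow_neg]
    exact (ENNReal.inv_lt_top.2 (ENNReal.rpow_pos (pos_iff_ne_zero.2 hch0) hchT)).ne
  have hcqIT : cqI ≠ ⊤ := by
    rw [hcqIdef, ENNReal.rpow_neg]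
    exact (ENNReal.inv_lt_top.2 (ENNReal.rpow_pos (pos_iff_ne_zero.2 hcq0) hcqT)).ne
  have hκT : κ ≠ ⊤ := by
    rw [hκdef]
    exact ENNReal.mul_ne_top (ENNReal.mul_ne_top (by norm_num) hchIT) hVhHT
  refine ⟨VhH * (cqI + chI) + 5 * κ, ?_, ?_⟩
  · exact ENNReal.add_lt_top.2 ⟨ENNReal.mul_lt_top hVhHT.lt_top
      (ENNReal.add_lt_top.2 ⟨hcqIT.lt_top, hchIT.lt_top⟩),
      ENNReal.mul_lt_top (by norm_num) hκT.lt_top⟩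
  intro a x₀ r hr ha
  obtain ⟨haInt, haMeas, haNorm, haSupp, haMean⟩ := ha
  have hr0 : (0:ℝ) < r := by linarith
  have hμB0 : μ (ball x₀ r) ≠ 0 := (hpos x₀ r hr0).ne'
  have hμBT : μ (ball x₀ r) ≠ ⊤ := (hfin x₀ r hr0).ne
  have heLpT : eLpNorm a 2 μ ≠ ⊤ := by
    refine (haNorm.trans_lt ?_).ne
    rw [ENNReal.rpow_neg]
    exact ENNReal.inv_lt_top.2 (ENNReal.rpow_pos (pos_iff_ne_zero.2 hμB0) hμBT)
  -- the 1-separated net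
  obtain ⟨S, hSsub, hSsep, hScov⟩ := exists_maximal_net μ x₀ r hr0
    (hfin x₀ (r + 1/2) (by linarith)) ch (pos_iff_ne_zero.2 hch0) hch
  set L : List M := S.toList with hLdef
  set n : ℕ := L.length with hndef
  set P : ℕ → M := fun i => L.getD i x₀ with hPdef
  have hPS : ∀ i, i < n → P i ∈ S := by
    intro i hi
    rw [hPdef]
    simp only []
    rw [List.getD_eq_getElem L x₀ hi]
    exact Finset.mem_toList.1 (L.getElem_mem hi)
  have hPd : ∀ i, dist x₀ (P i) < r := by
    intro i
    by_cases hi : i < n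
    · have := hSsub (hPS i hi)
      rw [mem_ball] at this
      rw [dist_comm]; exact this
    · have : P i = x₀ := List.getD_eq_default _ _ (not_lt.1 hi)
      rw [this, dist_self]; exact hr0
  have hPinj : ∀ i j, i < n → j < n → i ≠ j → P i ≠ P j := by
    intro i j hi hj hij
    have hnd : L.Nodup := S.nodup_toList
    rw [hPdef]
    simp only []
    rw [List.getD_eq_getElem L x₀ hi, List.getD_eq_getElem L x₀ hj]
    intro h
    exact hij (hnd.getElem_inj_iff.1 h)
  have hcover : ∀ y ∈ ball x₀ r, ∃ i, i < n ∧ dist y (P i) < 1 := by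
    intro y hy
    obtain ⟨p, hpS, hyp⟩ := hScov y hy
    obtain ⟨i, hi, hip⟩ := List.mem_iff_getElem.1 (Finset.mem_toList.2 hpS)
    refine ⟨i, hi, ?_⟩
    rw [hPdef]
    simp only []
    rw [List.getD_eq_getElem L x₀ hi, hip]
    exact hyp
  -- the partition
  set E : ℕ → Set M := fun i =>
    (ball (P i) 1 ∩ ball x₀ r) \ ⋃ (j : ℕ) (_ : j < i), ball (P j) 1 with hEdef
  have hEm : ∀ i, MeasurableSet (E i) := fun i =>
    ((measurableSet_ball.inter measurableSet_ball).diff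
      (MeasurableSet.iUnion fun j => MeasurableSet.iUnion fun _ => measurableSet_ball))
  have hEball : ∀ i, E i ⊆ ball (P i) 1 := fun i y hy => hy.1.1
  have hEB : ∀ i, E i ⊆ ball x₀ r := fun i y hy => hy.1.2
  have hEdisj : ∀ i j : ℕ, i ≠ j → Disjoint (E i) (E j) := by
    have key : ∀ i j : ℕ, i < j → Disjoint (E i) (E j) := by
      intro i j hij
      rw [Set.disjoint_left]
      intro y hyi hyj
      exact hyj.2 (Set.mem_iUnion.2 ⟨i, Set.mem_iUnion.2 ⟨hij, hyi.1.1⟩⟩)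
    intro i j hij
    rcases lt_or_gt_of_ne hij with h | h
    · exact key i j h
    · exact (key j i h).symm
  have hmemE : ∀ y ∈ ball x₀ r, ∃ i, (i < n ∧ y ∈ E i) ∧ ∀ k, k ≠ i → y ∉ E k := by
    intro y hy
    have hex : ∃ i, i < n ∧ y ∈ ball (P i) 1 := by
      obtain ⟨i, hi, hyi⟩ := hcover y hy
      exact ⟨i, hi, mem_ball.2 hyi⟩
    set i₀ := Nat.find hex with hi₀def
    obtain ⟨hi₀n, hi₀b⟩ := Nat.find_spec hex
    have hyE : y ∈ E i₀ := by
      refine ⟨⟨hi₀b, hy⟩, ?_⟩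
      intro hmem
      obtain ⟨j, hj⟩ := Set.mem_iUnion.1 hmem
      obtain ⟨hji, hjb⟩ := Set.mem_iUnion.1 hj
      exact Nat.find_min hex hji ⟨hji.trans hi₀n, hjb⟩
    refine ⟨i₀, ⟨hi₀n, hyE⟩, ?_⟩
    intro k hk hyk
    rcases lt_or_gt_of_ne hk with h | h
    · exact (Set.disjoint_left.1 (hEdisj k i₀ hk)) hyk hyE
    · exact hyk.2 (Set.mem_iUnion.2 ⟨i₀, Set.mem_iUnion.2 ⟨h, hi₀b⟩⟩)
  have hpart : ∀ y, ∑ i ∈ Finset.range n, (E i).indicator a y = a y := by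
    intro y
    by_cases hy : y ∈ ball x₀ r
    · obtain ⟨i₀, ⟨hi₀n, hyE⟩, huniq⟩ := hmemE y hy
      rw [Finset.sum_eq_single_of_mem i₀ (Finset.mem_range.2 hi₀n)]
      · exact Set.indicator_of_mem hyE a
      · intro k hk hkne
        exact Set.indicator_of_notMem (huniq k hkne) a
    · rw [haSupp y hy]
      refine Finset.sum_eq_zero fun i _ => ?_
      exact Set.indicator_of_notMem (fun hyE => hy (hEB i hyE)) a
  have hUnion : (⋃ i ∈ Finset.range n, E i) = ball x₀ r := by
    apply Set.Subset.antisymm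
    · intro y hy
      obtain ⟨i, hi⟩ := Set.mem_iUnion.1 hy
      obtain ⟨_, hyi⟩ := Set.mem_iUnion.1 hi
      exact hEB i hyi
    · intro y hy
      obtain ⟨i₀, ⟨hi₀n, hyE⟩, _⟩ := hmemE y hy
      exact Set.mem_iUnion.2 ⟨i₀, Set.mem_iUnion.2 ⟨Finset.mem_range.2 hi₀n, hyE⟩⟩
  -- the local means
  set m : ℕ → ℂ := fun i => ∫ y in E i, a y ∂μ with hmdef
  have hmsum : ∑ i ∈ Finset.range n, m i = 0 := by
    have h1 : ∫ y in ⋃ i ∈ Finset.range n, E i, a y ∂μ = ∑ i ∈ Finset.range n, m i := by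
      refine integral_biUnion_finset (Finset.range n) (fun i _ => hEm i) ?_ ?_
      · intro i _ j _ hij
        exact hEdisj i j hij
      · intro i _
        exact haInt.integrableOn
    rw [hUnion] at h1
    have h2 : ∫ y in ball x₀ r, a y ∂μ = ∫ y, a y ∂μ := by
      rw [← integral_indicator measurableSet_ball]
      congr 1
      funext y
      by_cases hy : y ∈ ball x₀ r
      · exact Set.indicator_of_mem hy a
      · rw [Set.indicator_of_notMem hy, haSupp y hy]
    rw [h2, haMean] at h1
    exact h1.symm
  -- geodesics
  choose γ hγ0 hγd hγiso using fun i => hGeo x₀ (P i)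
  set d : ℕ → ℝ := fun i => dist x₀ (P i) with hddef
  have hd0 : ∀ i, 0 ≤ d i := fun i => dist_nonneg
  have hdr : ∀ i, d i < r := fun i => hPd i
  set K : ℕ := ⌈4*r⌉₊ with hKdef
  have hK0 : 0 < K := Nat.ceil_pos.2 (by linarith)
  have hKr : 4*r ≤ (K:ℝ) := Nat.le_ceil _
  have hK5 : (K:ℝ) ≤ 5*r := by
    have := Nat.ceil_lt_add_one (by linarith : (0:ℝ) ≤ 4*r)
    rw [hKdef]
    push_cast
    linarith
  set sl : ℕ → ℝ := fun i => d i / K with hsldef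
  have hsl0 : ∀ i, 0 ≤ sl i := fun i => div_nonneg (hd0 i) (by positivity)
  have hsl4 : ∀ i, sl i ≤ 1/4 := by
    intro i
    rw [hsldef]
    simp only []
    rw [div_le_iff₀ (by exact_mod_cast hK0)]
    calc d i ≤ r := (hdr i).le
    _ = 4 * r / 4 := by ring
    _ ≤ (K:ℝ) / 4 := by linarith
    _ = 1/4 * K := by ring
  set q : ℕ → ℕ → M := fun i j => γ i (j * sl i) with hqdef
  have hmemIcc : ∀ i (j : ℕ), j ≤ K → (j : ℝ) * sl i ∈ Set.Icc (0:ℝ) (dist x₀ (P i)) := by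
    intro i j hj
    constructor
    · exact mul_nonneg (Nat.cast_nonneg j) (hsl0 i)
    · calc (j : ℝ) * sl i ≤ (K : ℝ) * sl i :=
            mul_le_mul_of_nonneg_right (by exact_mod_cast hj) (hsl0 i)
      _ = d i := by
          rw [hsldef]
          field_simp
  have hq0 : ∀ i, q i 0 = x₀ := by
    intro i
    rw [hqdef]
    simp only [Nat.cast_zero, zero_mul]
    exact hγ0 i
  have hqK : ∀ i, q i K = P i := by
    intro i
    rw [hqdef]
    simp only []
    have : (K : ℝ) * sl i = dist x₀ (P i) := by
      rw [hsldef]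
      field_simp; rfl
    rw [this]
    exact hγd i
  have hqdist : ∀ i (j : ℕ), j + 1 ≤ K → dist (q i j) (q i (j+1)) ≤ 1/4 := by
    intro i j hj
    rw [hqdef]
    simp only []
    rw [hγiso i _ (hmemIcc i j (le_of_lt hj)) _ (hmemIcc i (j+1) hj)]
    push_cast
    rw [abs_of_nonpos (by nlinarith [hsl0 i])]
    nlinarith [hsl4 i, hsl0 i]
  -- counting the net points
  have hn_le : (n : ℝ≥0∞) * cq ≤ μ (ball x₀ r) := by
    set p' : ℕ → M := fun i => γ i (min (d i) (r - 1/4)) with hp'def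
    have hrq : (0:ℝ) ≤ r - 1/4 := by linarith
    have hminIcc : ∀ i, min (d i) (r - 1/4) ∈ Set.Icc (0:ℝ) (dist x₀ (P i)) :=
      fun i => ⟨le_min (hd0 i) hrq, min_le_left _ _⟩
    have h0Icc : ∀ i, (0:ℝ) ∈ Set.Icc (0:ℝ) (dist x₀ (P i)) := fun i => ⟨le_refl 0, hd0 i⟩
    have hdIcc : ∀ i, dist x₀ (P i) ∈ Set.Icc (0:ℝ) (dist x₀ (P i)) :=
      fun i => ⟨hd0 i, le_refl _⟩
    have hp'x : ∀ i, dist x₀ (p' i) = min (d i) (r - 1/4) := by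
      intro i
      rw [hp'def]
      simp only []
      rw [← hγ0 i]
      rw [hγiso i 0 (h0Icc i) _ (hminIcc i)]
      rw [abs_of_nonpos (by simpa using (hminIcc i).1)]
      ring_nf
    have hp'P : ∀ i, dist (p' i) (P i) ≤ 1/4 := by
      intro i
      rw [hp'def]
      simp only []
      rw [← hγd i]
      rw [hγiso i _ (hminIcc i) _ (hdIcc i)]
      rcases min_cases (d i) (r - 1/4) with ⟨hmeq, _⟩ | ⟨hmeq, hlt⟩
      · rw [hmeq]
        simp [hddef]
      · rw [hmeq]
        rw [abs_of_nonpos (by simp only [hddef] at hlt ⊢; linarith [hlt.le])]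
        have := hdr i
        simp only [hddef] at this ⊢
        linarith
    have hsub : ∀ i, ball (p' i) (1/4) ⊆ ball x₀ r := by
      intro i z hz
      rw [mem_ball] at hz ⊢
      have h1 : dist (p' i) x₀ ≤ r - 1/4 := by
        rw [dist_comm, hp'x i]
        exact min_le_right _ _
      calc dist z x₀ ≤ dist z (p' i) + dist (p' i) x₀ := dist_triangle _ _ _
      _ < 1/4 + (r - 1/4) := by linarith
      _ = r := by ring
    have hdisj' : (↑(Finset.range n) : Set ℕ).PairwiseDisjoint
        (fun i => ball (p' i) (1/4)) := by
      intro i hi j hj hij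
      simp only [Finset.coe_range, Set.mem_Iio] at hi hj
      apply Metric.ball_disjoint_ball
      have h1 : 1 ≤ dist (P i) (P j) :=
        hSsep (P i) (hPS i hi) (P j) (hPS j hj) (hPinj i j hi hj hij)
      have h4 := dist_triangle4 (P i) (p' i) (p' j) (P j)
      have h5 := hp'P i
      have h6 := hp'P j
      rw [dist_comm (P i) (p' i)] at h4
      linarith
    calc (n : ℝ≥0∞) * cq = ∑ _i ∈ Finset.range n, cq := by
          rw [Finset.sum_const, Finset.card_range, nsmul_eq_mul]
    _ ≤ ∑ i ∈ Finset.range n, μ (ball (p' i) (1/4)) :=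
        Finset.sum_le_sum fun i _ => hcq (p' i)
    _ = μ (⋃ i ∈ Finset.range n, ball (p' i) (1/4)) :=
        (measure_biUnion_finset hdisj' (fun i _ => measurableSet_ball)).symm
    _ ≤ μ (ball x₀ r) := by
        refine measure_mono ?_
        intro z hz
        obtain ⟨i, hi⟩ := Set.mem_iUnion.1 hz
        obtain ⟨_, hzi⟩ := Set.mem_iUnion.1 hi
        exact hsub i hzi
  -- bump facts
  have hbump0 : ∀ p : M, 0 < μ (ball p (1/2)) := fun p => hpos p _ (by norm_num)
  have hbumpT : ∀ p : M, μ (ball p (1/2)) < ⊤ := fun p => hfin p _ (by norm_num)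
  have hbumpN : ∀ p : M, eLpNorm (bump μ p) 2 μ ≤ chI := fun p => by
    rw [bump_eLpNorm μ p (hbump0 p) (hbumpT p)]
    exact neg_half_antitone (hch p)
  have hbumpInt : ∀ p : M, Integrable (bump μ p) μ := fun p => bump_integrable μ p (hbumpT p)
  have hbumpI : ∀ p : M, ∫ y, bump μ p y ∂μ = 1 := fun p =>
    bump_integral μ p (hbump0 p) (hbumpT p)
  have hbumpM : ∀ p : M, AEStronglyMeasurable (bump μ p) μ := fun p =>
    (bump_meas μ p).aestronglyMeasurable
  have hone : ∀ p : M, (1:ℝ≥0∞) ≤ VhH * μ (ball p 1) ^ (-(1/2) : ℝ) := fun p =>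
    one_le_aux (hpos p 1 one_pos).ne' (hfin p 1 one_pos).ne (hVh p)
  -- coefficients
  set t : ℕ → ℝ≥0∞ := fun i => eLpNorm ((E i).indicator a) 2 μ with htdef
  have htle : ∀ i, t i ≤ eLpNorm a 2 μ := fun i => eLpNorm_indicator_le a
  have htT : ∀ i, t i ≠ ⊤ := fun i => ((htle i).trans_lt heLpT.lt_top).ne
  set Λ : ℕ → ℝ≥0∞ := fun i => (t i + ENNReal.ofReal ‖m i‖ * chI) * VhH with hΛdef
  have hΛT : ∀ i, Λ i ≠ ⊤ := fun i =>
    ENNReal.mul_ne_top (ENNReal.add_ne_top.2 ⟨htT i,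
      ENNReal.mul_ne_top ENNReal.ofReal_ne_top hchIT⟩) hVhHT
  set lp : ℕ → ℝ := fun i => (Λ i).toReal with hlpdef
  have hofΛ : ∀ i, ENNReal.ofReal (lp i) = Λ i := fun i =>
    ENNReal.ofReal_toReal (hΛT i)
  set cc : ℕ → ℝ := fun i => (ENNReal.ofReal ‖m i‖ * κ).toReal with hccdef
  have hofcc : ∀ i, ENNReal.ofReal (cc i) = ENNReal.ofReal ‖m i‖ * κ := fun i =>
    ENNReal.ofReal_toReal (ENNReal.mul_ne_top ENNReal.ofReal_ne_top hκT)
  -- piece atoms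
  have hpieceEx : ∀ i, ∃ A, IsH1Atom μ A (P i) 1 ∧
      ∀ᵐ y ∂μ, (E i).indicator a y - m i * bump μ (P i) y = (lp i : ℂ) * A y := by
    intro i
    apply exists_atom_scale μ _ (P i) (lp i) ENNReal.toReal_nonneg
    · exact (haInt.indicator (hEm i)).sub ((hbumpInt (P i)).const_mul (m i))
    · intro y hy
      have h1 : (E i).indicator a y = 0 :=
        Set.indicator_of_notMem (fun hyE => hy (hEball i hyE)) a
      have h2 : bump μ (P i) y = 0 := by
        refine bump_zero_outside μ (P i) y fun hyb => hy ?_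
        exact ball_subset_ball (by norm_num) hyb
      rw [h1, h2, mul_zero, sub_zero]
    · rw [integral_sub (haInt.indicator (hEm i)) ((hbumpInt (P i)).const_mul (m i)),
        integral_indicator (hEm i), integral_const_mul, hbumpI (P i), mul_one]
      exact sub_self _
    · have hsub : eLpNorm (fun y => (E i).indicator a y - m i * bump μ (P i) y) 2 μ
          ≤ t i + ENNReal.ofReal ‖m i‖ * chI := by
        have h1 := eLpNorm_sub_le (f := fun y => (E i).indicator a y)
          (g := fun y => m i * bump μ (P i) y)
          (haMeas.indicator (hEm i)) ((hbumpM (P i)).const_mul (m i)) one_le_two (μ := μ)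
        refine h1.trans ?_
        refine add_le_add (le_refl _) ?_
        have h2 : eLpNorm (fun y => m i * bump μ (P i) y) 2 μ
            = (‖m i‖₊ : ℝ≥0∞) * eLpNorm (bump μ (P i)) 2 μ := by
          exact eLpNorm_const_smul (m i) (bump μ (P i)) 2 μ
        rw [h2, ← enorm_eq_nnnorm, ← ofReal_norm]
        exact mul_le_mul_right (hbumpN (P i)) _
      refine hsub.trans ?_
      rw [hofΛ i]
      calc t i + ENNReal.ofReal ‖m i‖ * chI
          = (t i + ENNReal.ofReal ‖m i‖ * chI) * 1 := (mul_one _).symm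
        _ ≤ (t i + ENNReal.ofReal ‖m i‖ * chI) * (VhH * μ (ball (P i) 1) ^ (-(1/2) : ℝ)) :=
            mul_le_mul_right (hone (P i)) _
        _ = Λ i * μ (ball (P i) 1) ^ (-(1/2) : ℝ) := by rw [hΛdef, mul_assoc]
  choose Api hApi hApiEq using hpieceEx
  -- chain atoms
  have hchainEx : ∀ i, ∀ j, j < K → ∃ A, IsH1Atom μ A (q i j) 1 ∧
      ∀ᵐ y ∂μ, m i * (bump μ (q i (j+1)) y - bump μ (q i j) y) = (cc i : ℂ) * A y := by
    intro i j hj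
    have hjK : j + 1 ≤ K := hj
    have hqd : dist (q i (j+1)) (q i j) ≤ 1/4 := by
      rw [dist_comm]; exact hqdist i j hjK
    have hsub2 : ball (q i (j+1)) (1/2) ⊆ ball (q i j) 1 := by
      intro z hz
      rw [mem_ball] at hz ⊢
      calc dist z (q i j) ≤ dist z (q i (j+1)) + dist (q i (j+1)) (q i j) :=
            dist_triangle _ _ _
      _ < 1/2 + 1/4 := by linarith
      _ ≤ 1 := by norm_num
    apply exists_atom_scale μ _ (q i j) (cc i) ENNReal.toReal_nonneg
    · exact ((hbumpInt _).sub (hbumpInt _)).const_mul _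
    · intro y hy
      have h1 : bump μ (q i (j+1)) y = 0 :=
        bump_zero_outside μ _ y fun hyb => hy (hsub2 hyb)
      have h2 : bump μ (q i j) y = 0 :=
        bump_zero_outside μ _ y fun hyb => hy (ball_subset_ball (by norm_num) hyb)
      rw [h1, h2, sub_self, mul_zero]
    · rw [integral_const_mul, integral_sub (hbumpInt _) (hbumpInt _), hbumpI, hbumpI,
        sub_self, mul_zero]
    · have hsub : eLpNorm (fun y => m i * (bump μ (q i (j+1)) y - bump μ (q i j) y)) 2 μ
          ≤ ENNReal.ofReal ‖m i‖ * (chI + chI) := by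
        have h2 : eLpNorm (fun y => m i * (bump μ (q i (j+1)) y - bump μ (q i j) y)) 2 μ
            = (‖m i‖₊ : ℝ≥0∞) *
              eLpNorm (fun y => bump μ (q i (j+1)) y - bump μ (q i j) y) 2 μ := by
          exact eLpNorm_const_smul (m i)
            (fun y => bump μ (q i (j+1)) y - bump μ (q i j) y) 2 μ
        rw [h2, ← enorm_eq_nnnorm, ← ofReal_norm]
        refine mul_le_mul_right ?_ _
        have h3 := eLpNorm_sub_le (f := bump μ (q i (j+1))) (g := bump μ (q i j))
          (hbumpM _) (hbumpM _) one_le_two (μ := μ)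
        exact h3.trans (add_le_add (hbumpN _) (hbumpN _))
      refine hsub.trans ?_
      rw [hofcc i]
      calc ENNReal.ofReal ‖m i‖ * (chI + chI)
          = ENNReal.ofReal ‖m i‖ * (2 * chI) * 1 := by rw [two_mul, mul_one]
        _ ≤ ENNReal.ofReal ‖m i‖ * (2 * chI) * (VhH * μ (ball (q i j) 1) ^ (-(1/2) : ℝ)) :=
            mul_le_mul_right (hone (q i j)) _
        _ = ENNReal.ofReal ‖m i‖ * κ * μ (ball (q i j) 1) ^ (-(1/2) : ℝ) := by
            rw [hκdef]; ring
  choose! Aci hAci hAciEq using hchainEx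
  -- the sums bounds
  have hS2 : ∑ i ∈ Finset.range n, ENNReal.ofReal ‖m i‖ ≤ 1 := by
    have step1 : ∀ i ∈ Finset.range n,
        ENNReal.ofReal ‖m i‖ ≤ ∫⁻ y in E i, (‖a y‖₊ : ℝ≥0∞) ∂μ := by
      intro i _
      calc ENNReal.ofReal ‖m i‖ ≤ ENNReal.ofReal (∫ y in E i, ‖a y‖ ∂μ) :=
            ENNReal.ofReal_le_ofReal (norm_integral_le_integral_norm _)
      _ = ∫⁻ y in E i, (‖a y‖₊ : ℝ≥0∞) ∂μ :=
            ofReal_integral_norm_eq_lintegral_enorm haInt.integrableOn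
    calc ∑ i ∈ Finset.range n, ENNReal.ofReal ‖m i‖
        ≤ ∑ i ∈ Finset.range n, ∫⁻ y in E i, (‖a y‖₊ : ℝ≥0∞) ∂μ :=
          Finset.sum_le_sum step1
      _ = ∫⁻ y in ⋃ i ∈ Finset.range n, E i, (‖a y‖₊ : ℝ≥0∞) ∂μ :=
          (lintegral_biUnion_finset (fun i _ j _ hij => hEdisj i j hij)
            (fun i _ => hEm i) _).symm
      _ = ∫⁻ y in ball x₀ r, (‖a y‖₊ : ℝ≥0∞) ∂μ := by rw [hUnion]
      _ ≤ ∫⁻ y, (‖a y‖₊ : ℝ≥0∞) ∂μ := setLIntegral_le_lintegral _ _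
      _ ≤ eLpNorm a 2 μ * μ (ball x₀ r) ^ (1/2 : ℝ) :=
          holder_lintegral μ a haMeas _ measurableSet_ball haSupp
      _ ≤ μ (ball x₀ r) ^ (-(1/2) : ℝ) * μ (ball x₀ r) ^ (1/2 : ℝ) :=
          mul_le_mul_left (by rw [show (-(1/2 : ℝ)) = (-(1 / 2) : ℝ) by norm_num]; exact haNorm) _
      _ = 1 := by rw [mul_comm]; exact rpow_half_mul_inv hμB0 hμBT
  have hS1 : ∑ i ∈ Finset.range n, t i ≤ cqI := by
    set u : ℕ → ℝ≥0∞ := fun i => ∫⁻ y in E i, (‖a y‖₊ : ℝ≥0∞) ^ (2:ℝ) ∂μ with hudef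
    have htform : ∀ i, t i = u i ^ (1/2 : ℝ) := by
      intro i
      rw [htdef, hudef]
      simp only []
      rw [eLpNorm_indicator_eq_eLpNorm_restrict (hEm i),
        eLpNorm_eq_lintegral_rpow_enorm_toReal two_ne_zero ENNReal.ofNat_ne_top]
      norm_num; rfl
    have hu_sum : ∑ i ∈ Finset.range n, u i ≤ ∫⁻ y, (‖a y‖₊ : ℝ≥0∞) ^ (2:ℝ) ∂μ := by
      calc ∑ i ∈ Finset.range n, u i
          = ∫⁻ y in ⋃ i ∈ Finset.range n, E i, (‖a y‖₊ : ℝ≥0∞) ^ (2:ℝ) ∂μ :=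
            (lintegral_biUnion_finset (fun i _ j _ hij => hEdisj i j hij)
              (fun i _ => hEm i) _).symm
        _ ≤ ∫⁻ y, (‖a y‖₊ : ℝ≥0∞) ^ (2:ℝ) ∂μ := setLIntegral_le_lintegral _ _
    have husum' : (∑ i ∈ Finset.range n, u i) ^ (1/2 : ℝ) ≤ eLpNorm a 2 μ := by
      rw [eLpNorm_eq_lintegral_rpow_enorm_toReal two_ne_zero ENNReal.ofNat_ne_top]
      have h2 : ENNReal.toReal 2 = 2 := rfl
      rw [h2]
      exact ENNReal.rpow_le_rpow hu_sum (by norm_num)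
    have hncast : ((Finset.range n).card : ℝ≥0∞) = (n : ℝ≥0∞) := by
      rw [Finset.card_range]
    have hnle : (n : ℝ≥0∞) ≤ μ (ball x₀ r) * cq⁻¹ := by
      have := (ENNReal.le_div_iff_mul_le (Or.inl hcq0) (Or.inl hcqT)).2 hn_le
      rwa [ENNReal.div_eq_inv_mul, mul_comm] at this
    calc ∑ i ∈ Finset.range n, t i
        = ∑ i ∈ Finset.range n, u i ^ (1/2 : ℝ) :=
          Finset.sum_congr rfl fun i _ => htform i
      _ ≤ ((Finset.range n).card : ℝ≥0∞) ^ (1/2 : ℝ)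
            * (∑ i ∈ Finset.range n, u i) ^ (1/2 : ℝ) := sum_rpow_half_le _ u
      _ ≤ (n : ℝ≥0∞) ^ (1/2 : ℝ) * eLpNorm a 2 μ := by
          rw [hncast]
          exact mul_le_mul_right husum' _
      _ ≤ (μ (ball x₀ r) * cq⁻¹) ^ (1/2 : ℝ) * μ (ball x₀ r) ^ (-(1/2) : ℝ) := by
          refine mul_le_mul' (ENNReal.rpow_le_rpow hnle (by norm_num)) ?_
          rw [show (-(1/2 : ℝ)) = (-(1 / 2) : ℝ) by norm_num]
          exact haNorm
      _ = cqI := by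
          rw [ENNReal.mul_rpow_of_ne_top hμBT (ENNReal.inv_ne_top.2 hcq0),
            ENNReal.inv_rpow, ← ENNReal.rpow_neg, mul_right_comm,
            rpow_half_mul_inv hμB0 hμBT, one_mul, ← hcqIdef]
  -- assembling the decomposition
  set terms : List (ℝ × (M → ℂ)) :=
    ((List.range n).map fun i => (lp i, Api i)) ++
    ((List.range n).flatMap fun i => (List.range K).map fun j => (cc i, Aci i j))
    with htermsdef
  have hTermsAtom : ∀ pr ∈ terms, ∃ x r, 0 < r ∧ r ≤ 1 ∧ IsH1Atom μ pr.2 x r := by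
    intro pr hpr
    rcases List.mem_append.1 hpr with hl | hr'
    · obtain ⟨i, _, rfl⟩ := List.mem_map.1 hl
      exact ⟨P i, 1, one_pos, le_refl _, hApi i⟩
    · obtain ⟨i, hi, j, hj, rfl⟩ := list_flat_mem n K _ pr hr'
      exact ⟨q i j, 1, one_pos, le_refl _, hAci i j hj⟩
  have hae1 : ∀ᵐ y ∂μ, ∀ i : ℕ,
      (E i).indicator a y - m i * bump μ (P i) y = (lp i : ℂ) * Api i y :=
    ae_all_iff.2 hApiEq
  have hae2 : ∀ᵐ y ∂μ, ∀ i j : ℕ, j < K →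
      m i * (bump μ (q i (j+1)) y - bump μ (q i j) y) = (cc i : ℂ) * Aci i j y := by
    rw [ae_all_iff]
    intro i
    rw [ae_all_iff]
    intro j
    by_cases hj : j < K
    · exact (hAciEq i j hj).mono fun y h => fun _ => h
    · exact Eventually.of_forall fun y hj' => absurd hj' hj
  have hsum : ∀ᵐ y ∂μ, a y = (terms.map fun pr => (pr.1 : ℂ) * pr.2 y).sum := by
    filter_upwards [hae1, hae2] with y h1 h2
    rw [htermsdef, List.map_append, List.sum_append, List.map_map,
      list_flat_sum n K (fun i j => (cc i, Aci i j)) (fun pr => (pr.1 : ℂ) * pr.2 y),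
      list_range_sum]
    simp only [Function.comp]
    have e1 : ∑ i ∈ Finset.range n, ((lp i : ℂ) * Api i y)
        = ∑ i ∈ Finset.range n, ((E i).indicator a y - m i * bump μ (P i) y) :=
      Finset.sum_congr rfl fun i _ => (h1 i).symm
    have e2 : ∑ i ∈ Finset.range n, ∑ j ∈ Finset.range K, ((cc i : ℂ) * Aci i j y)
        = ∑ i ∈ Finset.range n, m i * (bump μ (P i) y - bump μ x₀ y) := by
      refine Finset.sum_congr rfl fun i _ => ?_
      calc ∑ j ∈ Finset.range K, ((cc i : ℂ) * Aci i j y)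
          = ∑ j ∈ Finset.range K,
              m i * (bump μ (q i (j+1)) y - bump μ (q i j) y) :=
            Finset.sum_congr rfl fun j hj => (h2 i j (Finset.mem_range.1 hj)).symm
        _ = m i * ∑ j ∈ Finset.range K, (bump μ (q i (j+1)) y - bump μ (q i j) y) :=
            (Finset.mul_sum _ _ _).symm
        _ = m i * (bump μ (q i K) y - bump μ (q i 0) y) := by
            rw [Finset.sum_range_sub (fun j => bump μ (q i j) y)]
        _ = m i * (bump μ (P i) y - bump μ x₀ y) := by rw [hqK i, hq0 i]
    rw [e1, e2]
    have e3 : ∑ i ∈ Finset.range n, m i * (bump μ (P i) y - bump μ x₀ y)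
        = ∑ i ∈ Finset.range n, m i * bump μ (P i) y
          - (∑ i ∈ Finset.range n, m i) * bump μ x₀ y := by
      simp_rw [mul_sub]
      rw [Finset.sum_sub_distrib, ← Finset.sum_mul]
    rw [e3, hmsum, zero_mul, sub_zero, Finset.sum_sub_distrib, hpart y]
    ring
  -- conclusion
  refine (hardy_le_list μ a terms hTermsAtom hsum).trans ?_
  have hmapsum : (terms.map fun pr => ENNReal.ofReal |pr.1|).sum
      = (∑ i ∈ Finset.range n, Λ i)
        + ∑ i ∈ Finset.range n, (K : ℝ≥0∞) * (ENNReal.ofReal ‖m i‖ * κ) := by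
    rw [htermsdef, List.map_append, List.sum_append, List.map_map,
      list_flat_sum n K (fun i j => (cc i, Aci i j)) (fun pr => ENNReal.ofReal |pr.1|),
      list_range_sum]
    congr 1
    · refine Finset.sum_congr rfl fun i _ => ?_
      simp only [Function.comp]
      rw [abs_of_nonneg (ENNReal.toReal_nonneg : (0:ℝ) ≤ lp i)]
      exact hofΛ i
    · refine Finset.sum_congr rfl fun i _ => ?_
      dsimp only
      rw [Finset.sum_const, Finset.card_range, nsmul_eq_mul]
      congr 1
      rw [abs_of_nonneg (ENNReal.toReal_nonneg : (0:ℝ) ≤ cc i)]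
      exact hofcc i
  rw [hmapsum]
  have hA1 : ∑ i ∈ Finset.range n, Λ i ≤ VhH * (cqI + chI) := by
    have e : ∑ i ∈ Finset.range n, Λ i
        = (∑ i ∈ Finset.range n, t i
            + (∑ i ∈ Finset.range n, ENNReal.ofReal ‖m i‖) * chI) * VhH := by
      rw [hΛdef, ← Finset.sum_mul]
      congr 1
      rw [Finset.sum_add_distrib, ← Finset.sum_mul]
    rw [e]
    calc (∑ i ∈ Finset.range n, t i
          + (∑ i ∈ Finset.range n, ENNReal.ofReal ‖m i‖) * chI) * VhH
        ≤ (cqI + 1 * chI) * VhH :=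
          mul_le_mul_left (add_le_add hS1 (mul_le_mul_left hS2 chI)) VhH
      _ = VhH * (cqI + chI) := by rw [one_mul, mul_comm]
  have hK' : (K : ℝ≥0∞) ≤ ENNReal.ofReal (5*r) := by
    rw [← ENNReal.ofReal_natCast]
    exact ENNReal.ofReal_le_ofReal hK5
  have hA2 : ∑ i ∈ Finset.range n, (K : ℝ≥0∞) * (ENNReal.ofReal ‖m i‖ * κ)
      ≤ 5 * κ * ENNReal.ofReal r := by
    have e : ∑ i ∈ Finset.range n, (K : ℝ≥0∞) * (ENNReal.ofReal ‖m i‖ * κ)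
        = (K : ℝ≥0∞) * ((∑ i ∈ Finset.range n, ENNReal.ofReal ‖m i‖) * κ) := by
      rw [← Finset.mul_sum]
      congr 1
      rw [← Finset.sum_mul]
    rw [e]
    calc (K : ℝ≥0∞) * ((∑ i ∈ Finset.range n, ENNReal.ofReal ‖m i‖) * κ)
        ≤ (K : ℝ≥0∞) * (1 * κ) := mul_le_mul_right (mul_le_mul_left hS2 κ) _
      _ = (K : ℝ≥0∞) * κ := by rw [one_mul]
      _ ≤ ENNReal.ofReal (5*r) * κ := mul_le_mul_left hK' κ
      _ = 5 * κ * ENNReal.ofReal r := by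
          rw [ENNReal.ofReal_mul (by norm_num : (0:ℝ) ≤ 5)]
          have h5 : ENNReal.ofReal (5:ℝ) = 5 := by
            rw [ENNReal.ofReal_ofNat]
          rw [h5]
          ring
  have hone_r : (1 : ℝ≥0∞) ≤ ENNReal.ofReal r := ENNReal.one_le_ofReal.2 hr.le
  calc (∑ i ∈ Finset.range n, Λ i)
        + ∑ i ∈ Finset.range n, (K : ℝ≥0∞) * (ENNReal.ofReal ‖m i‖ * κ)
      ≤ VhH * (cqI + chI) + 5 * κ * ENNReal.ofReal r := add_le_add hA1 hA2
    _ ≤ VhH * (cqI + chI) * ENNReal.ofReal r + 5 * κ * ENNReal.ofReal r := by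
        refine add_le_add ?_ (le_refl _)
        nth_rewrite 1 [← mul_one (VhH * (cqI + chI))]
        exact mul_le_mul_right hone_r _
    _ = (VhH * (cqI + chI) + 5 * κ) * ENNReal.ofReal r := (add_mul _ _ _).symm
end
end

section
/- Let β > 0, b ∈ (0, β²], τ ∈ [0,∞), let J be a positive integer and k an integer with k > τ + J, and let C ≥ 0. Suppose m is holomorphic on the strip S_β and satisfies |m^{(j)}(ζ)| ≤ C · max(|ζ²+β²|^{−τ−j}, |ζ|^{−j}) for all ζ ∈ S_β and all j ∈ {0, 1, …, J}. Then the function u_k(ζ) = ((ζ²+β²)/(ζ²+β²+b))^k · m(ζ) is holomorphic on S_β (note that ζ²+β²+b ≠ 0 on S_β), and there exists a constant C′ depending only on β, b, τ, J, k (and not on m or C) such that |u_k^{(j)}(ζ)| ≤ C′ C (1+|ζ|)^{−j} for all ζ ∈ S_β and all j ∈ {0, 1, …, J}. (This is the key estimate in the proof of Theorem 4.3 of the paper; the case b = β² also gives the estimate for the function v_k occurring there.) -/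
noncomputable section

open Complex Set Metric Filter Polynomial

section Stmt4Aux
lemma isOpen_strip (β : ℝ) : IsOpen {ζ : ℂ | |ζ.im| < β} :=
  isOpen_lt (Complex.continuous_im.abs) continuous_const

lemma d_re_eq (β b : ℝ) (ζ : ℂ) :
    (ζ^2 + (β:ℂ)^2 + (b:ℂ)).re = ζ.re^2 - ζ.im^2 + β^2 + b := by
  simp [pow_two, Complex.add_re, Complex.mul_re]

lemma d_re_ge {β : ℝ} (b : ℝ) {ζ : ℂ} (hζ : |ζ.im| < β) :
    ζ.re^2 + b ≤ (ζ^2 + (β:ℂ)^2 + (b:ℂ)).re := by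
  rw [d_re_eq]
  have h := abs_lt.mp hζ
  nlinarith [h.1, h.2]

lemma d_ne_zero {β b : ℝ} (hb : 0 < b) {ζ : ℂ} (hζ : |ζ.im| < β) :
    ζ^2 + (β:ℂ)^2 + (b:ℂ) ≠ 0 := by
  intro h
  have h2 := d_re_ge b hζ
  rw [h] at h2
  simp at h2
  nlinarith [sq_nonneg ζ.re]

lemma abs_d_ge_b {β b : ℝ} (hb : 0 < b) {ζ : ℂ} (hζ : |ζ.im| < β) :
    b ≤ ‖ζ^2 + (β:ℂ)^2 + (b:ℂ)‖ := by
  refine le_trans ?_ (Complex.re_le_norm _)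
  have := d_re_ge b hζ
  nlinarith [sq_nonneg ζ.re]

lemma q_ne_zero {β : ℝ} (hβ : 0 < β) {ζ : ℂ} (hζ : |ζ.im| < β) :
    ζ^2 + (β:ℂ)^2 ≠ 0 := by
  intro h
  have h2 : (ζ^2 + (β:ℂ)^2).re = ζ.re^2 - ζ.im^2 + β^2 := by
    simp [pow_two, Complex.add_re, Complex.mul_re]
  rw [h] at h2
  simp at h2
  have h3 := abs_lt.mp hζ
  nlinarith [sq_nonneg ζ.re]

lemma abs_q_le_two_abs_d {β b : ℝ} (hb : 0 < b) {ζ : ℂ} (hζ : |ζ.im| < β) :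
    ‖ζ^2 + (β:ℂ)^2‖ ≤ 2 * ‖ζ^2 + (β:ℂ)^2 + (b:ℂ)‖ := by
  have h0 := norm_sub_le (ζ^2 + (β:ℂ)^2 + (b:ℂ)) ((b:ℂ))
  have heq : (ζ^2 + (β:ℂ)^2 + (b:ℂ)) - (b:ℂ) = ζ^2 + (β:ℂ)^2 := by ring
  rw [heq] at h0
  have h2 : ‖(b:ℂ)‖ = b := by
    simp [abs_of_pos hb]
  rw [h2] at h0
  linarith [abs_d_ge_b hb hζ]

lemma abs_d_ge_quad {β b : ℝ} (hβ : 0 < β) (hb : 0 < b) {ζ : ℂ} (hζ : |ζ.im| < β) :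
    min b 1 / (2*(1+β)^2) * (1 + ‖ζ‖)^2 ≤ ‖ζ^2 + (β:ℂ)^2 + (b:ℂ)‖ := by
  have h1 : ζ.re^2 + b ≤ ‖ζ^2 + (β:ℂ)^2 + (b:ℂ)‖ :=
    le_trans (d_re_ge b hζ) (Complex.re_le_norm _)
  have h2 : ‖ζ‖ ≤ |ζ.re| + β :=
    le_trans (Complex.norm_le_abs_re_add_abs_im ζ) (by linarith [hζ])
  have h3 : min b 1 * (1 + ζ.re^2) ≤ ζ.re^2 + b := by
    rcases min_cases b 1 with ⟨h, hb1⟩ | ⟨h, hb1⟩ <;> rw [h] <;> nlinarith [sq_nonneg ζ.re]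
  have h4 : (1 + ‖ζ‖)^2 ≤ 2*(1+β)^2 * (1 + ζ.re^2) := by
    have h4a : (1 + ‖ζ‖)^2 ≤ (1+β+|ζ.re|)^2 := by
      apply pow_le_pow_left₀ (by positivity) (by linarith)
    refine le_trans h4a ?_
    have hb1 : (0:ℝ) ≤ (1+β)^2 - 1 := by nlinarith
    nlinarith [sq_nonneg (1+β-|ζ.re|), _root_.sq_abs ζ.re, abs_nonneg ζ.re, hβ,
      mul_nonneg hb1 (sq_nonneg ζ.re)]
  have hden : (0:ℝ) < 2*(1+β)^2 := by positivity
  rw [div_mul_eq_mul_div, div_le_iff₀ hden]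
  have h5 : (0:ℝ) ≤ min b 1 := le_min hb.le zero_le_one
  nlinarith [mul_le_mul_of_nonneg_left h4 h5, mul_le_mul_of_nonneg_left h3 hden.le,
    mul_le_mul_of_nonneg_left h1 hden.le]

lemma polyEval_bound (P : Polynomial ℂ) (N : ℕ) (h : P.natDegree ≤ N) (z : ℂ) :
    ‖P.eval z‖ ≤ (∑ i ∈ Finset.range (N+1), ‖P.coeff i‖) * (1 + ‖z‖)^N := by
  have h1 : P.eval z = ∑ i ∈ Finset.range (N+1), P.coeff i * z^i :=
    P.eval_eq_sum_range' (Nat.lt_succ_of_le h) z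
  rw [h1]
  refine le_trans (norm_sum_le _ _) ?_
  rw [Finset.sum_mul]
  apply Finset.sum_le_sum
  intro i hi
  rw [norm_mul]
  apply mul_le_mul_of_nonneg_left ?_ (norm_nonneg _)
  have h2 : ‖z^i‖ = ‖z‖ ^ i := by simp
  rw [h2]
  calc ‖z‖ ^ i ≤ (1 + ‖z‖)^i := by
        apply pow_le_pow_left₀ (norm_nonneg z) (by linarith)
    _ ≤ (1 + ‖z‖)^N := by
        apply pow_le_pow_right₀ (by linarith [norm_nonneg z])
        exact le_trans (Finset.mem_range_succ_iff.mp hi) (le_refl N)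

lemma cauchy_bound {f : ℂ → ℂ} {c : ℂ} {R M : ℝ} (hR : 0 < R)
    (hf : DifferentiableOn ℂ f (closedBall c R))
    (hM : ∀ w ∈ closedBall c R, ‖f w‖ ≤ M) (n : ℕ) :
    ‖iteratedDeriv n f c‖ ≤ n.factorial * M / R ^ n := by
  have hM0 : 0 ≤ M := le_trans (norm_nonneg _) (hM c (mem_closedBall_self hR.le))
  lift R to NNReal using hR.le with R hRR
  have hR' : 0 < R := by exact_mod_cast hR
  have h := hf.hasFPowerSeriesOnBall hR'
  have h2 := h.factorial_smul (1 : ℂ) n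
  have h3 : iteratedDeriv n f c = iteratedFDeriv ℂ n f c fun _ => 1 :=
    iteratedDeriv_eq_iteratedFDeriv
  rw [h3, ← h2]
  have h4 : ‖n.factorial • (cauchyPowerSeries f c (R:ℝ) n fun _ => (1:ℂ))‖
      = n.factorial * ‖cauchyPowerSeries f c (R:ℝ) n fun _ => (1:ℂ)‖ := by
    rw [← Nat.cast_smul_eq_nsmul ℝ, norm_smul]
    simp
  rw [h4]
  have h5 : ‖cauchyPowerSeries f c (R:ℝ) n fun _ => (1:ℂ)‖
      ≤ ‖cauchyPowerSeries f c (R:ℝ) n‖ := by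
    refine le_trans ((cauchyPowerSeries f c (R:ℝ) n).le_opNorm _) ?_
    simp
  have hcont : ContinuousOn (fun θ : ℝ => ‖f (circleMap c (R:ℝ) θ)‖) (Set.uIcc 0 (2*Real.pi)) := by
    apply ContinuousOn.norm
    apply hf.continuousOn.comp (continuous_circleMap c (R:ℝ)).continuousOn
    intro θ _
    exact circleMap_mem_closedBall c hR.le θ
  have hint : (∫ θ : ℝ in (0)..2 * Real.pi, ‖f (circleMap c (R:ℝ) θ)‖) ≤ 2 * Real.pi * M := by
    calc (∫ θ : ℝ in (0)..2 * Real.pi, ‖f (circleMap c (R:ℝ) θ)‖)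
        ≤ ∫ _ : ℝ in (0)..2 * Real.pi, M := by
          apply intervalIntegral.integral_mono_on Real.two_pi_pos.le
            (hcont.intervalIntegrable) intervalIntegrable_const
          intro θ _
          exact hM _ (circleMap_mem_closedBall c hR.le θ)
      _ = 2 * Real.pi * M := by simp [mul_comm]
  have h6 := norm_cauchyPowerSeries_le f c (R:ℝ) n
  have h7 : ((2 * Real.pi)⁻¹ * ∫ θ : ℝ in (0)..2 * Real.pi, ‖f (circleMap c (R:ℝ) θ)‖) * |(R:ℝ)|⁻¹ ^ n
      ≤ M / (R:ℝ) ^ n := by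
    rw [_root_.abs_of_nonneg hR.le]
    rw [div_eq_mul_inv M, ← inv_pow]
    have : (2 * Real.pi)⁻¹ * (∫ θ : ℝ in (0)..2 * Real.pi, ‖f (circleMap c (R:ℝ) θ)‖) ≤ M := by
      rw [inv_mul_le_iff₀ Real.two_pi_pos]
      linarith [hint]
    exact mul_le_mul_of_nonneg_right this (by positivity)
  calc (n.factorial : ℝ) * ‖cauchyPowerSeries f c (R:ℝ) n fun _ => (1:ℂ)‖
      ≤ n.factorial * (M / (R:ℝ)^n) := by
        apply mul_le_mul_of_nonneg_left (le_trans h5 (le_trans h6 h7)) (by positivity)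
    _ = n.factorial * M / (R:ℝ)^n := by ring

lemma key_ineq (A Dv t c₂ KS τ NS : ℝ) (n e k J : ℕ)
    (hA : 0 < A) (hD : 0 < Dv) (ht : 1 ≤ t) (hc₂ : 0 < c₂) (hc₂1 : c₂ ≤ 1)
    (hKS : 0 ≤ KS) (hτ : 0 ≤ τ) (hne : n + e ≤ J) (hkk : τ + J < k) (hnk : n ≤ k)
    (hAD : A ≤ 2*Dv) (hDt : c₂ * t^2 ≤ Dv) (hNS : 0 ≤ NS) (hNSb : NS ≤ KS * t^(3*n)) :
    A^(k-n) * NS / Dv^(k+n) * t^(n+e) ≤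
      (KS * 2^(k:ℝ) * (c₂⁻¹)^((3*(J:ℝ))+τ)) * A^(τ+(e:ℝ)) := by
  have ht0 : (0:ℝ) < t := lt_of_lt_of_le one_pos ht
  have hJe : ((n:ℝ) + e) ≤ (J:ℝ) := by exact_mod_cast hne
  rw [div_mul_eq_mul_div, div_le_iff₀ (by positivity)]
  set ε : ℝ := (k:ℝ) - n - τ - e with hεdef
  have hε0 : 0 ≤ ε := by
    have : (τ:ℝ) + J < k := hkk
    simp only [hεdef]
    linarith
  have e1 : A^(k-n) = A ^ ((τ+(e:ℝ)) + ε) := by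
    rw [← Real.rpow_natCast A (k-n)]
    congr 1
    rw [Nat.cast_sub hnk]
    simp only [hεdef]
    ring
  have e2 : Dv^(k+n) = Dv ^ (ε + ((2*(n:ℝ)) + τ + e)) := by
    rw [← Real.rpow_natCast Dv (k+n)]
    congr 1
    push_cast
    simp only [hεdef]
    ring
  rw [e1, e2, Real.rpow_add hA, Real.rpow_add hD]
  have hAε : A^ε ≤ 2^(k:ℝ) * Dv^ε := by
    calc A^ε ≤ (2*Dv)^ε := Real.rpow_le_rpow hA.le hAD hε0
      _ = 2^ε * Dv^ε := Real.mul_rpow (by norm_num) hD.le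
      _ ≤ 2^(k:ℝ) * Dv^ε := by
          apply mul_le_mul_of_nonneg_right ?_ (Real.rpow_nonneg hD.le _)
          apply Real.rpow_le_rpow_of_exponent_le one_le_two
          simp only [hεdef]
          linarith [Nat.cast_nonneg (α := ℝ) n, Nat.cast_nonneg (α := ℝ) e]
  have hDv2 : c₂^((3*(J:ℝ))+τ) * t^(4*n+e) ≤ Dv^((2*(n:ℝ))+τ+e) := by
    have hx0 : (0:ℝ) ≤ (2*(n:ℝ)) + τ + e := by positivity
    have step1 : (c₂*t^2)^((2*(n:ℝ))+τ+e) ≤ Dv^((2*(n:ℝ))+τ+e) :=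
      Real.rpow_le_rpow (by positivity) hDt hx0
    have step2 : (c₂*t^2)^((2*(n:ℝ))+τ+e)
        = c₂^((2*(n:ℝ))+τ+e) * t^(2*((2*(n:ℝ))+τ+e)) := by
      rw [Real.mul_rpow hc₂.le (by positivity), ← Real.rpow_natCast t 2,
        ← Real.rpow_mul ht0.le]
      norm_num
    have step3 : c₂^((3*(J:ℝ))+τ) ≤ c₂^((2*(n:ℝ))+τ+e) := by
      apply Real.rpow_le_rpow_of_exponent_ge hc₂ hc₂1
      linarith
    have step4 : (t:ℝ)^(4*n+e) ≤ t^(2*((2*(n:ℝ))+τ+e)) := by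
      rw [← Real.rpow_natCast t (4*n+e)]
      apply Real.rpow_le_rpow_of_exponent_le ht
      push_cast
      linarith
    calc c₂^((3*(J:ℝ))+τ) * t^(4*n+e)
        ≤ c₂^((2*(n:ℝ))+τ+e) * t^(2*((2*(n:ℝ))+τ+e)) := by
          apply mul_le_mul step3 step4 (by positivity) (Real.rpow_nonneg hc₂.le _)
      _ = (c₂*t^2)^((2*(n:ℝ))+τ+e) := step2.symm
      _ ≤ Dv^((2*(n:ℝ))+τ+e) := step1
  have hc₂inv : (c₂⁻¹)^((3*(J:ℝ))+τ) * c₂^((3*(J:ℝ))+τ) = 1 := by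
    rw [← Real.mul_rpow (by positivity) hc₂.le, inv_mul_cancel₀ hc₂.ne', Real.one_rpow]
  calc A ^ (τ+(e:ℝ)) * A^ε * NS * t^(n+e)
      ≤ A ^ (τ+(e:ℝ)) * (2^(k:ℝ) * Dv^ε) * (KS * t^(3*n)) * t^(n+e) := by
        apply mul_le_mul_of_nonneg_right ?_ (by positivity)
        apply mul_le_mul ?_ hNSb hNS (by positivity)
        exact mul_le_mul_of_nonneg_left hAε (Real.rpow_nonneg hA.le _)
    _ = KS * 2^(k:ℝ) * A ^ (τ+(e:ℝ)) * Dv^ε * t^(4*n+e) := by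
        rw [show 4*n+e = 3*n + (n+e) from by omega, pow_add]
        ring
    _ = KS * 2^(k:ℝ) * (c₂⁻¹)^((3*(J:ℝ))+τ) * A ^ (τ+(e:ℝ)) * Dv^ε
          * (c₂^((3*(J:ℝ))+τ) * t^(4*n+e)) := by
        rw [show KS * 2^(k:ℝ) * (c₂⁻¹)^((3*(J:ℝ))+τ) * A ^ (τ+(e:ℝ)) * Dv^ε
              * (c₂^((3*(J:ℝ))+τ) * t^(4*n+e))
            = ((c₂⁻¹)^((3*(J:ℝ))+τ) * c₂^((3*(J:ℝ))+τ)) * (KS * 2^(k:ℝ) * A ^ (τ+(e:ℝ)) * Dv^ε * t^(4*n+e)) from by ring, hc₂inv]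
        ring
    _ ≤ KS * 2^(k:ℝ) * (c₂⁻¹)^((3*(J:ℝ))+τ) * A ^ (τ+(e:ℝ)) * Dv^ε * Dv^((2*(n:ℝ))+τ+e) := by
        apply mul_le_mul_of_nonneg_left hDv2
        positivity
    _ = KS * 2^(k:ℝ) * (c₂⁻¹)^((3*(J:ℝ))+τ) * A ^ (τ+(e:ℝ)) * (Dv^ε * Dv^((2*(n:ℝ))+τ+e)) := by
        ring

lemma leibniz_bound {s : Set ℂ} (hs : IsOpen s) {G m : ℂ → ℂ}
    (hG : DifferentiableOn ℂ G s) (hm : DifferentiableOn ℂ m s) {ζ : ℂ} (hζ : ζ ∈ s) (j : ℕ) :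
    ‖iteratedDeriv j (fun w => G w * m w) ζ‖ ≤ ∑ i ∈ Finset.range (j+1),
      (j.choose i : ℝ) * ‖iteratedDeriv i G ζ‖ * ‖iteratedDeriv (j-i) m ζ‖ := by
  have h := norm_iteratedFDerivWithin_mul_le (𝕜 := ℂ)
    (hG.contDiffOn hs) (hm.contDiffOn hs) hs.uniqueDiffOn hζ
    (le_refl (j : WithTop ℕ∞))
  calc ‖iteratedDeriv j (fun w => G w * m w) ζ‖
      = ‖iteratedFDerivWithin ℂ j (fun w => G w * m w) s ζ‖ := by
        rw [← norm_iteratedFDeriv_eq_norm_iteratedDeriv,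
          iteratedFDerivWithin_of_isOpen j hs hζ]
    _ ≤ ∑ i ∈ Finset.range (j+1), (j.choose i : ℝ) * ‖iteratedFDerivWithin ℂ i G s ζ‖
          * ‖iteratedFDerivWithin ℂ (j-i) m s ζ‖ := h
    _ = ∑ i ∈ Finset.range (j+1),
          (j.choose i : ℝ) * ‖iteratedDeriv i G ζ‖ * ‖iteratedDeriv (j-i) m ζ‖ := by
        apply Finset.sum_congr rfl
        intro i _
        rw [iteratedFDerivWithin_of_isOpen i hs hζ, iteratedFDerivWithin_of_isOpen (j-i) hs hζ,
          norm_iteratedFDeriv_eq_norm_iteratedDeriv, norm_iteratedFDeriv_eq_norm_iteratedDeriv]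

lemma m_bound_A {β τ C : ℝ} (hβ : 0 < β) (hτ : 0 ≤ τ) (hC : 0 ≤ C) (J : ℕ) {m : ℂ → ℂ}
    (hdm : DifferentiableOn ℂ m {ζ : ℂ | |ζ.im| < β})
    (hm0 : ∀ w : ℂ, |w.im| < β → ‖m w‖ * min (‖w^2+(β:ℂ)^2‖ ^ (τ:ℝ)) 1 ≤ C) :
    ∀ ζ : ℂ, ‖ζ‖ ≤ β/4 → ∀ e : ℕ, e ≤ J →
      ‖iteratedDeriv e m ζ‖ ≤ ((J.factorial : ℝ) * (min ((β^2/2) ^ (τ:ℝ)) 1)⁻¹ * (1+4/β)^J) * C := by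
  intro ζ hζ e he
  set μ : ℝ := min ((β^2/2) ^ (τ:ℝ)) 1 with hμdef
  have hμ0 : 0 < μ := lt_min (Real.rpow_pos_of_pos (by positivity) _) one_pos
  have hball : ∀ w ∈ closedBall ζ (β/4), |w.im| < β ∧ ‖w‖ ≤ β/2 := by
    intro w hw
    rw [mem_closedBall, Complex.dist_eq] at hw
    have h1 : |w.im - ζ.im| ≤ β/4 := le_trans (by simpa using Complex.abs_im_le_norm (w - ζ)) hw
    have h2 : |ζ.im| ≤ β/4 := le_trans (Complex.abs_im_le_norm ζ) hζ
    have h3 : ‖w‖ ≤ β/2 := by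
      calc ‖w‖ = ‖ζ + (w - ζ)‖ := by ring_nf
        _ ≤ ‖ζ‖ + ‖w - ζ‖ := norm_add_le _ _
        _ ≤ β/2 := by linarith
    refine ⟨?_, h3⟩
    have := abs_sub_abs_le_abs_sub w.im ζ.im
    calc |w.im| ≤ |ζ.im| + |w.im - ζ.im| := by
          have := abs_add_le ζ.im (w.im - ζ.im); simpa using this
      _ < β := by linarith
  have hmw : ∀ w ∈ closedBall ζ (β/4), ‖m w‖ ≤ C * μ⁻¹ := by
    intro w hw
    obtain ⟨hw1, hw2⟩ := hball w hw
    have habs : β^2/2 ≤ ‖w^2+(β:ℂ)^2‖ := by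
      have e1 : ‖((β:ℂ))^2‖ ≤ ‖w^2+(β:ℂ)^2‖ + ‖w^2‖ := by
        calc ‖((β:ℂ))^2‖ = ‖(w^2+(β:ℂ)^2) - w^2‖ := by ring_nf
          _ ≤ ‖w^2+(β:ℂ)^2‖ + ‖w^2‖ := norm_sub_le _ _
      have e2 : ‖((β:ℂ))^2‖ = β^2 := by
        rw [norm_pow]; simp [abs_of_pos hβ]
      have e3 : ‖w^2‖ ≤ β^2/4 := by
        rw [norm_pow]
        calc ‖w‖^2 ≤ (β/2)^2 := by
              apply pow_le_pow_left₀ (norm_nonneg _)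
              simpa using hw2
          _ = β^2/4 := by ring
      rw [e2] at e1
      have : ‖w^2+(β:ℂ)^2‖ = ‖w^2+(β:ℂ)^2‖ := rfl
      rw [this]
      nlinarith [sq_nonneg β]
    have hmin : μ ≤ min (‖w^2+(β:ℂ)^2‖ ^ (τ:ℝ)) 1 := by
      apply min_le_min ?_ (le_refl 1)
      exact Real.rpow_le_rpow (by positivity) habs hτ
    have h4 := hm0 w hw1
    have h5 : ‖m w‖ * μ ≤ C := by
      refine le_trans ?_ h4
      exact mul_le_mul_of_nonneg_left hmin (norm_nonneg _)
    calc ‖m w‖ = ‖m w‖ * μ * μ⁻¹ := by field_simp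
      _ ≤ C * μ⁻¹ := by
          apply mul_le_mul_of_nonneg_right h5 (by positivity)
  have hsubset : closedBall ζ (β/4) ⊆ {ζ : ℂ | |ζ.im| < β} := fun w hw => (hball w hw).1
  have hcb := cauchy_bound (by positivity : (0:ℝ) < β/4) (hdm.mono hsubset) hmw e
  refine le_trans hcb ?_
  have hrw : (e.factorial : ℝ) * (C * μ⁻¹) / (β/4)^e
      = (e.factorial : ℝ) * (C * μ⁻¹) * (4/β)^e := by
    rw [div_eq_mul_inv, ← inv_pow, show ((β:ℝ)/4)⁻¹ = 4/β from by
      rw [inv_div]]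
  rw [hrw]
  have hf : (e.factorial : ℝ) ≤ J.factorial := by
    exact_mod_cast Nat.factorial_le he
  have hpow2 : ((4:ℝ)/β)^e ≤ (1+4/β)^J := by
    calc ((4:ℝ)/β)^e ≤ (1+4/β)^e := by
          apply pow_le_pow_left₀ (by positivity) (by linarith)
      _ ≤ (1+4/β)^J := by
          have h14 : (1:ℝ) ≤ 1+4/β := by
            have : (0:ℝ) < 4/β := by positivity
            linarith
          apply pow_le_pow_right₀ h14 he
  calc (e.factorial : ℝ) * (C * μ⁻¹) * (4/β)^e
      ≤ (J.factorial : ℝ) * (C * μ⁻¹) * (1+4/β)^J := by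
        apply mul_le_mul (mul_le_mul hf le_rfl (by positivity) (by positivity)) hpow2
          (by positivity) (by positivity)
    _ = ((J.factorial : ℝ) * μ⁻¹ * (1+4/β)^J) * C := by ring

lemma rep_lemma (β b : ℝ) (hβ : 0 < β) (hb : 0 < b) (J k : ℕ) (hkJ : J + 1 ≤ k) (n : ℕ) :
    ∃ S : Polynomial ℂ, S.natDegree ≤ 3*n ∧ (n ≤ J → ∀ ζ : ℂ, |ζ.im| < β →
      iteratedDeriv n (fun w : ℂ => ((w^2+(β:ℂ)^2)/(w^2+(β:ℂ)^2+(b:ℂ)))^k) ζ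
        = (ζ^2+(β:ℂ)^2)^(k-n) * Polynomial.eval ζ S / (ζ^2+(β:ℂ)^2+(b:ℂ))^(k+n)) := by
  induction n with
  | zero =>
    refine ⟨1, by simp, fun _ ζ hζ => ?_⟩
    rw [iteratedDeriv_zero]
    rw [div_pow, Polynomial.eval_one, mul_one]
    simp
  | succ n IH =>
    obtain ⟨S, hdeg, hrep⟩ := IH
    by_cases hn : n + 1 ≤ J
    swap
    · exact ⟨1, by simp, fun h => absurd h hn⟩
    have hnJ : n ≤ J := by omega
    have hk2 : n + 2 ≤ k := by omega
    set Q : Polynomial ℂ := X^2 + C ((β:ℂ)^2) with hQdef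
    set D : Polynomial ℂ := X^2 + C ((β:ℂ)^2 + (b:ℂ)) with hDdef
    set T : Polynomial ℂ := C ((k:ℂ) - (n:ℂ)) * (C 2 * X) * S * D + Q * D * derivative S
        - C ((k:ℂ) + (n:ℂ)) * Q * S * (C 2 * X) with hTdef
    have hQd : Q.natDegree ≤ 2 := by
      refine le_trans (natDegree_add_le _ _) ?_
      simp [natDegree_X_pow]
    have hDd : D.natDegree ≤ 2 := by
      refine le_trans (natDegree_add_le _ _) ?_
      simp [natDegree_X_pow]
    have h2X : (C (2:ℂ) * X).natDegree ≤ 1 := by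
      refine le_trans (natDegree_mul_le) ?_
      simp
    have hmid : (Q * D * derivative S).natDegree ≤ 3*n+3 := by
      rcases Nat.eq_zero_or_pos n with h0 | hpos
      · subst h0
        have hS0 : derivative S = 0 := by
          have hSc : S = C (S.coeff 0) := Polynomial.eq_C_of_natDegree_le_zero (by simpa using hdeg)
          rw [hSc, derivative_C]
        rw [hS0, mul_zero]
        simp
      · have hSd' : (derivative S).natDegree ≤ 3*n - 1 :=
          le_trans (natDegree_derivative_le S) (by omega)
        refine le_trans (natDegree_mul_le) ?_
        have g1 : (Q*D).natDegree ≤ 4 := le_trans (natDegree_mul_le) (by omega)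
        omega
    refine ⟨T, ?_, fun _ ζ hζ => ?_⟩
    · rw [hTdef]
      refine le_trans (natDegree_sub_le _ _) (max_le ?_ ?_)
      · refine le_trans (natDegree_add_le _ _) (max_le ?_ ?_)
        · refine le_trans (natDegree_mul_le) ?_
          have g1 : (C ((k:ℂ) - (n:ℂ)) * (C 2 * X) * S).natDegree ≤ 3*n + 1 := by
            refine le_trans (natDegree_mul_le) ?_
            have g2 : (C ((k:ℂ) - (n:ℂ)) * (C 2 * X)).natDegree ≤ 1 := by
              refine le_trans (natDegree_mul_le) ?_
              simp only [natDegree_C, zero_add]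
              exact h2X
            omega
          omega
        · exact hmid
      · refine le_trans (natDegree_mul_le) ?_
        have g1 : (C ((k:ℂ) + (n:ℂ)) * Q * S).natDegree ≤ 3*n + 2 := by
          refine le_trans (natDegree_mul_le) ?_
          have g2 : (C ((k:ℂ) + (n:ℂ)) * Q).natDegree ≤ 2 := by
            refine le_trans (natDegree_mul_le) ?_
            simp only [natDegree_C, zero_add]
            exact hQd
          omega
        omega
    · -- pointwise computation
      have hdne := d_ne_zero hb hζ
      have hqne := q_ne_zero hβ hζ
      rw [iteratedDeriv_succ]
      have hev : iteratedDeriv n (fun w : ℂ => ((w^2+(β:ℂ)^2)/(w^2+(β:ℂ)^2+(b:ℂ)))^k)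
          =ᶠ[nhds ζ] (fun w => (w^2+(β:ℂ)^2)^(k-n) * Polynomial.eval w S / (w^2+(β:ℂ)^2+(b:ℂ))^(k+n)) := by
        apply Filter.eventuallyEq_of_mem ((isOpen_strip β).mem_nhds hζ)
        intro w hw
        exact hrep hnJ w hw
      rw [hev.deriv_eq]
      have hq2 : HasDerivAt (fun w : ℂ => w^2 + (β:ℂ)^2) (2*ζ) ζ := by
        simpa using (hasDerivAt_pow 2 ζ).add_const ((β:ℂ)^2)
      have hd2 : HasDerivAt (fun w : ℂ => w^2 + (β:ℂ)^2 + (b:ℂ)) (2*ζ) ζ := hq2.add_const _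
      have hN : HasDerivAt (fun w : ℂ => (w^2+(β:ℂ)^2)^(k-n) * Polynomial.eval w S)
          (((k-n : ℕ):ℂ) * (ζ^2+(β:ℂ)^2)^(k-n-1) * (2*ζ) * Polynomial.eval ζ S
            + (ζ^2+(β:ℂ)^2)^(k-n) * Polynomial.eval ζ (derivative S)) ζ :=
        (hq2.pow _).mul (S.hasDerivAt ζ)
      have hD : HasDerivAt (fun w : ℂ => (w^2+(β:ℂ)^2+(b:ℂ))^(k+n))
          (((k+n : ℕ):ℂ) * (ζ^2+(β:ℂ)^2+(b:ℂ))^(k+n-1) * (2*ζ)) ζ := hd2.pow _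
      have hdiv := hN.div hD (pow_ne_zero _ hdne)
      erw [hdiv.deriv]
      obtain ⟨c, hc⟩ : ∃ c, k = n + 2 + c := ⟨k - (n+2), by omega⟩
      subst hc
      rw [show n+2+c - (n+1) = c+1 from by omega, show n+2+c - n = c+2 from by omega,
        show c+2-1 = c+1 from by omega, show n+2+c+n-1 = n+1+c+n from by omega]
      rw [hTdef, hQdef, hDdef]
      simp only [Polynomial.eval_add, Polynomial.eval_sub, Polynomial.eval_mul, Polynomial.eval_pow,
        Polynomial.eval_C, Polynomial.eval_X]
      push_cast
      field_simp
      ring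

lemma G_bounds (β b τ : ℝ) (hβ : 0 < β) (hb : 0 < b) (hτ : 0 ≤ τ) (J k : ℕ)
    (hkJ : J + 1 ≤ k) (hkk : τ + J < (k:ℝ)) :
    ∃ K : ℝ, 0 ≤ K ∧ ∀ ζ : ℂ, |ζ.im| < β → ∀ n e : ℕ, n + e ≤ J →
      (‖iteratedDeriv n (fun w : ℂ => ((w^2+(β:ℂ)^2)/(w^2+(β:ℂ)^2+(b:ℂ)))^k) ζ‖
          * (1+‖ζ‖)^(n+e)
        ≤ K * ‖ζ^2+(β:ℂ)^2‖ ^ (τ + (e:ℝ))) ∧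
      ‖iteratedDeriv n (fun w : ℂ => ((w^2+(β:ℂ)^2)/(w^2+(β:ℂ)^2+(b:ℂ)))^k) ζ‖
          * (1+‖ζ‖)^n ≤ K := by
  have hrep := rep_lemma β b hβ hb J k hkJ
  choose Sf hdeg hrepf using hrep
  set F : ℕ → ℝ := fun n => ∑ i2 ∈ Finset.range (3*n+1), ‖(Sf n).coeff i2‖ with hFdef
  have hF0 : ∀ n, 0 ≤ F n := fun n => Finset.sum_nonneg (fun _ _ => norm_nonneg _)
  set KS : ℝ := ∑ n ∈ Finset.range (J+1), F n with hKSdef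
  have hKS0 : 0 ≤ KS := Finset.sum_nonneg (fun n _ => hF0 n)
  have hFle : ∀ n, n ≤ J → F n ≤ KS := by
    intro n hn
    apply Finset.single_le_sum (fun i _ => hF0 i) (Finset.mem_range_succ_iff.mpr hn)
  set c₂ : ℝ := min b 1 / (2*(1+β)^2) with hc₂def
  have hc₂0 : 0 < c₂ := by
    apply div_pos (lt_min hb one_pos) (by positivity)
  have hc₂1 : c₂ ≤ 1 := by
    rw [hc₂def, div_le_one (by positivity)]
    have h1 : min b 1 ≤ 1 := min_le_right _ _
    nlinarith [sq_nonneg β, hβ]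
  set Kτ : ℝ := KS * 2^(k:ℝ) * (c₂⁻¹)^((3*(J:ℝ))+τ) with hKτ
  set K0 : ℝ := KS * 2^(k:ℝ) * (c₂⁻¹)^(3*(J:ℝ)) with hK0
  have hKτ0 : 0 ≤ Kτ := by
    apply mul_nonneg (mul_nonneg hKS0 (Real.rpow_nonneg (by norm_num) _)) (Real.rpow_nonneg (by positivity) _)
  have hK00 : 0 ≤ K0 := by
    apply mul_nonneg (mul_nonneg hKS0 (Real.rpow_nonneg (by norm_num) _)) (Real.rpow_nonneg (by positivity) _)
  refine ⟨max Kτ K0, le_trans hKτ0 (le_max_left _ _), ?_⟩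
  intro ζ hζ n e hne
  have hnJ : n ≤ J := by omega
  have hnk : n ≤ k := by omega
  have hqpos : 0 < ‖ζ^2+(β:ℂ)^2‖ := norm_pos_iff.mpr (q_ne_zero hβ hζ)
  have hdpos : 0 < ‖ζ^2+(β:ℂ)^2+(b:ℂ)‖ := norm_pos_iff.mpr (d_ne_zero hb hζ)
  have ht1 : (1:ℝ) ≤ 1 + ‖ζ‖ := by linarith [norm_nonneg ζ]
  have hnorm : ‖iteratedDeriv n (fun w : ℂ => ((w^2+(β:ℂ)^2)/(w^2+(β:ℂ)^2+(b:ℂ)))^k) ζ‖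
      = ‖ζ^2+(β:ℂ)^2‖^(k-n) * ‖Polynomial.eval ζ (Sf n)‖
        / ‖ζ^2+(β:ℂ)^2+(b:ℂ)‖^(k+n) := by
    rw [hrepf n hnJ ζ hζ]
    rw [norm_div, norm_mul, norm_pow, norm_pow]
  have hNSb : ‖Polynomial.eval ζ (Sf n)‖ ≤ KS * (1+‖ζ‖)^(3*n) := by
    refine le_trans (polyEval_bound (Sf n) (3*n) (hdeg n) ζ) ?_
    apply mul_le_mul_of_nonneg_right (hFle n hnJ) (by positivity)
  constructor
  · rw [hnorm]
    refine le_trans (key_ineq _ _ _ c₂ KS τ _ n e k J hqpos hdpos ht1 hc₂0 hc₂1 hKS0 hτ hne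
      (by exact_mod_cast hkk) hnk (abs_q_le_two_abs_d hb hζ) (abs_d_ge_quad hβ hb hζ)
      (norm_nonneg _) hNSb) ?_
    apply mul_le_mul_of_nonneg_right (le_max_left _ _) (Real.rpow_nonneg hqpos.le _)
  · rw [hnorm]
    have h0J : (0:ℝ) + (J:ℝ) < (k:ℝ) := by
      have : (J:ℝ) ≤ τ + J := by linarith
      linarith
    have hne0 : n + 0 ≤ J := by omega
    have := key_ineq (‖ζ^2+(β:ℂ)^2‖) (‖ζ^2+(β:ℂ)^2+(b:ℂ)‖)
      (1+‖ζ‖) c₂ KS 0 (‖Polynomial.eval ζ (Sf n)‖) n 0 k J hqpos hdpos ht1 hc₂0 hc₂1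
      hKS0 le_rfl hne0 (by exact_mod_cast h0J) hnk (abs_q_le_two_abs_d hb hζ)
      (abs_d_ge_quad hβ hb hζ) (norm_nonneg _) hNSb
    simp only [Nat.add_zero, Nat.cast_zero, add_zero, Real.rpow_zero, mul_one] at this
    refine le_trans this ?_
    exact le_max_right _ _
end Stmt4Aux

/-- The function `u_k(ζ) = ((ζ²+β²)/(ζ²+β²+b))^k · m(ζ)`. -/
def uFun (β b : ℝ) (k : ℕ) (m : ℂ → ℂ) : ℂ → ℂ := fun ζ =>
  ((ζ ^ 2 + (β : ℂ) ^ 2) / (ζ ^ 2 + (β : ℂ) ^ 2 + (b : ℂ))) ^ k * m ζ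

theorem stmt4 (β b τ : ℝ) (hβ : 0 < β) (hb : 0 < b) (hbβ : b ≤ β ^ 2)
    (hτ : 0 ≤ τ) (J k : ℕ) (hJ : 0 < J) (hk : τ + J < (k : ℝ)) :
    -- `ζ² + β² + b ≠ 0` on the strip `S_β`
    (∀ ζ : ℂ, |ζ.im| < β → ζ ^ 2 + (β : ℂ) ^ 2 + (b : ℂ) ≠ 0) ∧
    ∃ C' : ℝ, ∀ C : ℝ, 0 ≤ C → ∀ m : ℂ → ℂ,
      DifferentiableOn ℂ m {ζ : ℂ | |ζ.im| < β} →
      -- `|m⁽ʲ⁾(ζ)| ≤ C · max(|ζ²+β²|^{-τ-j}, |ζ|^{-j})` on `S_β`, for `0 ≤ j ≤ J`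
      (∀ ζ : ℂ, |ζ.im| < β → ∀ j : ℕ, j ≤ J →
        ‖iteratedDeriv j m ζ‖ *
          min (‖ζ ^ 2 + (β : ℂ) ^ 2‖ ^ (τ + (j : ℝ))) (‖ζ‖ ^ j) ≤ C) →
      -- conclusion: `u_k` is holomorphic on `S_β` and satisfies Mihlin bounds there
      DifferentiableOn ℂ (uFun β b k m) {ζ : ℂ | |ζ.im| < β} ∧
      ∀ ζ : ℂ, |ζ.im| < β → ∀ j : ℕ, j ≤ J →
        ‖iteratedDeriv j (uFun β b k m) ζ‖ ≤ C' * C / (1 + ‖ζ‖) ^ j := by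
  have hs : IsOpen {ζ : ℂ | |ζ.im| < β} := isOpen_strip β
  have hdne : ∀ ζ : ℂ, |ζ.im| < β → ζ ^ 2 + (β : ℂ) ^ 2 + (b : ℂ) ≠ 0 :=
    fun ζ hζ => d_ne_zero hb hζ
  refine ⟨hdne, ?_⟩
  have hkJ : J + 1 ≤ k := by
    have h1 : (J:ℝ) < (k:ℝ) := by linarith
    have : J < k := by exact_mod_cast h1
    omega
  obtain ⟨KG, hKG0, hKG⟩ := G_bounds β b τ hβ hb hτ J k hkJ hk
  set μ : ℝ := min ((β^2/2) ^ (τ:ℝ)) 1 with hμdef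
  have hμ0 : 0 < μ := lt_min (Real.rpow_pos_of_pos (by positivity) _) one_pos
  set KmA : ℝ := (J.factorial : ℝ) * μ⁻¹ * (1+4/β)^J with hKmAdef
  have hKmA0 : 0 ≤ KmA := by
    apply mul_nonneg (mul_nonneg (Nat.cast_nonneg _) (by positivity)) (by positivity)
  set Kc : ℝ := max KG (KG * (1+4/β)^J) with hKcdef
  have hKc0 : 0 ≤ Kc := le_trans hKG0 (le_max_left _ _)
  set C' : ℝ := 2^J * ((1+β/4)^J * KG * KmA + Kc) with hC'def
  refine ⟨C', ?_⟩
  intro C hC m hdm hm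
  set G : ℂ → ℂ := fun w : ℂ => ((w^2+(β:ℂ)^2)/(w^2+(β:ℂ)^2+(b:ℂ)))^k with hGdef
  have hGd : DifferentiableOn ℂ G {ζ : ℂ | |ζ.im| < β} := by
    apply DifferentiableOn.pow
    apply DifferentiableOn.div
    · exact ((differentiable_pow 2).add_const _).differentiableOn
    · exact (((differentiable_pow 2).add_const _).add_const _).differentiableOn
    · intro ζ hζ
      exact hdne ζ hζ
  have hufun : uFun β b k m = fun w => G w * m w := rfl
  have hud : DifferentiableOn ℂ (uFun β b k m) {ζ : ℂ | |ζ.im| < β} := by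
    rw [hufun]
    exact hGd.mul hdm
  refine ⟨hud, ?_⟩
  intro ζ hζ j hj
  set a : ℝ := ‖ζ‖ with hadef
  have ha0 : 0 ≤ a := norm_nonneg ζ
  have hta : (0:ℝ) < (1+a)^j := by positivity
  rw [le_div_iff₀ hta]
  have hL : ‖iteratedDeriv j (uFun β b k m) ζ‖ ≤ ∑ i ∈ Finset.range (j+1),
      (j.choose i : ℝ) * ‖iteratedDeriv i G ζ‖ * ‖iteratedDeriv (j-i) m ζ‖ := by
    rw [hufun]
    exact leibniz_bound hs hGd hdm hζ j
  have hsum2 : (∑ i ∈ Finset.range (j+1), (j.choose i : ℝ)) = 2^j := by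
    have := Nat.sum_range_choose j
    exact_mod_cast this
  have hGsup : ∀ i : ℕ, i ≤ J → ‖iteratedDeriv i G ζ‖ ≤ KG := by
    intro i hi
    have h2 := (hKG ζ hζ i 0 (by omega)).2
    have h3 : ‖iteratedDeriv i G ζ‖ * 1 ≤ ‖iteratedDeriv i G ζ‖ * (1+a)^i := by
      apply mul_le_mul_of_nonneg_left ?_ (norm_nonneg _)
      apply one_le_pow₀
      linarith
    rw [mul_one] at h3
    exact le_trans h3 h2
  by_cases hcase : a ≤ β/4
  · -- Region A : near zero, use Cauchy estimates for m
    have hm0 : ∀ w : ℂ, |w.im| < β →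
        ‖m w‖ * min (‖w^2+(β:ℂ)^2‖ ^ (τ:ℝ)) 1 ≤ C := by
      intro w hw
      have := hm w hw 0 (Nat.zero_le J)
      simpa using this
    have hmA := m_bound_A hβ hτ hC J hdm hm0 ζ hcase
    have hterm : ∀ i ∈ Finset.range (j+1),
        (j.choose i : ℝ) * ‖iteratedDeriv i G ζ‖ * ‖iteratedDeriv (j-i) m ζ‖
          ≤ (j.choose i : ℝ) * (KG * (KmA * C)) := by
      intro i hi
      have hij : i ≤ j := Finset.mem_range_succ_iff.mp hi
      have h1 := hGsup i (le_trans hij hj)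
      have h2 : ‖iteratedDeriv (j-i) m ζ‖ ≤ KmA * C :=
        hmA (j-i) (le_trans (Nat.sub_le _ _) hj)
      rw [mul_assoc]
      apply mul_le_mul_of_nonneg_left ?_ (Nat.cast_nonneg _)
      exact mul_le_mul h1 h2 (norm_nonneg _) hKG0
    have hsumle : (∑ i ∈ Finset.range (j+1),
        (j.choose i : ℝ) * ‖iteratedDeriv i G ζ‖ * ‖iteratedDeriv (j-i) m ζ‖)
          ≤ 2^j * (KG * (KmA * C)) := by
      calc _ ≤ ∑ i ∈ Finset.range (j+1), (j.choose i : ℝ) * (KG * (KmA * C)) :=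
            Finset.sum_le_sum hterm
        _ = 2^j * (KG * (KmA * C)) := by rw [← Finset.sum_mul, hsum2]
    have hpa : (1+a)^j ≤ (1+β/4)^J := by
      calc (1+a)^j ≤ (1+β/4)^j := by
            apply pow_le_pow_left₀ (by linarith) (by linarith)
        _ ≤ (1+β/4)^J := by
            apply pow_le_pow_right₀ (by linarith) hj
    have h2j : (2:ℝ)^j ≤ 2^J := pow_le_pow_right₀ one_le_two hj
    have hx : (0:ℝ) ≤ (1+β/4)^J * KG * KmA :=
      mul_nonneg (mul_nonneg (pow_nonneg (by linarith) J) hKG0) hKmA0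
    calc ‖iteratedDeriv j (uFun β b k m) ζ‖ * (1+a)^j
        ≤ (2^j * (KG * (KmA * C))) * (1+β/4)^J := by
          apply mul_le_mul (le_trans hL hsumle) hpa hta.le
          exact mul_nonneg (by positivity) (mul_nonneg hKG0 (mul_nonneg hKmA0 hC))
      _ = 2^j * (((1+β/4)^J * KG * KmA) * C) := by ring
      _ ≤ 2^J * (((1+β/4)^J * KG * KmA) * C) :=
          mul_le_mul_of_nonneg_right h2j (mul_nonneg hx hC)
      _ ≤ 2^J * ((((1+β/4)^J * KG * KmA) + Kc) * C) := by
          apply mul_le_mul_of_nonneg_left ?_ (by positivity)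
          apply mul_le_mul_of_nonneg_right ?_ hC
          linarith
      _ = C' * C := by rw [hC'def]; ring
  · -- Region B : away from zero
    push_neg at hcase
    have hterm : ∀ i ∈ Finset.range (j+1),
        ((j.choose i : ℝ) * ‖iteratedDeriv i G ζ‖ * ‖iteratedDeriv (j-i) m ζ‖) * (1+a)^j
          ≤ (j.choose i : ℝ) * (Kc * C) := by
      intro i hi
      have hij : i ≤ j := Finset.mem_range_succ_iff.mp hi
      set e : ℕ := j - i with hedef
      have hie : i + e = j := by omega
      have heJ : i + e ≤ J := by omega
      set minv : ℝ := min (‖ζ^2+(β:ℂ)^2‖ ^ (τ + (e:ℝ))) (a ^ e) with hminvdef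
      have hqpos : 0 < ‖ζ^2+(β:ℂ)^2‖ := norm_pos_iff.mpr (q_ne_zero hβ hζ)
      have hminv0 : 0 < minv := by
        apply lt_min (Real.rpow_pos_of_pos hqpos _)
        apply pow_pos (by linarith)
      have hmB : ‖iteratedDeriv e m ζ‖ ≤ C / minv := by
        rw [le_div_iff₀ hminv0]
        exact hm ζ hζ e (by omega)
      have hGB : ‖iteratedDeriv i G ζ‖ * (1+a)^j ≤ Kc * minv := by
        rw [← hie]
        have hb1 := (hKG ζ hζ i e heJ).1
        have hb2 : ‖iteratedDeriv i G ζ‖ * (1+a)^(i+e) ≤ (KG * (1+4/β)^J) * a^e := by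
          rw [pow_add, ← mul_assoc]
          have s1 : ‖iteratedDeriv i G ζ‖ * (1+a)^i ≤ KG := (hKG ζ hζ i 0 (by omega)).2
          have s2 : (1+a)^e ≤ ((1+4/β) * a)^e := by
            apply pow_le_pow_left₀ (by linarith)
            have hba : 1 ≤ (4/β) * a := by
              rw [div_mul_eq_mul_div, le_div_iff₀ hβ]
              linarith
            nlinarith
          calc ‖iteratedDeriv i G ζ‖ * (1+a)^i * (1+a)^e
              ≤ KG * ((1+4/β) * a)^e := by
                apply mul_le_mul s1 s2 (by positivity) hKG0
            _ = (KG * (1+4/β)^e) * a^e := by rw [mul_pow]; ring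
            _ ≤ (KG * (1+4/β)^J) * a^e := by
                apply mul_le_mul_of_nonneg_right ?_ (by positivity)
                apply mul_le_mul_of_nonneg_left ?_ hKG0
                apply pow_le_pow_right₀ ?_ (by omega)
                have h4β : (0:ℝ) < 4/β := by positivity
                linarith
        have hKc1 : KG ≤ Kc := le_max_left _ _
        have hKc2 : KG * (1+4/β)^J ≤ Kc := le_max_right _ _
        rcases le_total (‖ζ^2+(β:ℂ)^2‖ ^ (τ + (e:ℝ))) (a^e) with hmm|hmm
        · rw [hminvdef, min_eq_left hmm]
          exact le_trans hb1 (mul_le_mul_of_nonneg_right hKc1 (Real.rpow_nonneg hqpos.le _))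
        · rw [hminvdef, min_eq_right hmm]
          exact le_trans hb2 (mul_le_mul_of_nonneg_right hKc2 (by positivity))
      have hcancel : (Kc * minv) * (C / minv) = Kc * C := by
        field_simp
      calc ((j.choose i : ℝ) * ‖iteratedDeriv i G ζ‖ * ‖iteratedDeriv (j-i) m ζ‖) * (1+a)^j
          = (j.choose i : ℝ) * ((‖iteratedDeriv i G ζ‖ * (1+a)^j) * ‖iteratedDeriv e m ζ‖) := by
            rw [hedef]; ring
        _ ≤ (j.choose i : ℝ) * ((Kc * minv) * (C / minv)) := by
            apply mul_le_mul_of_nonneg_left ?_ (Nat.cast_nonneg _)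
            apply mul_le_mul hGB hmB (norm_nonneg _) ?_
            exact mul_nonneg hKc0 hminv0.le
        _ = (j.choose i : ℝ) * (Kc * C) := by rw [hcancel]
    calc ‖iteratedDeriv j (uFun β b k m) ζ‖ * (1+a)^j
        ≤ (∑ i ∈ Finset.range (j+1),
            (j.choose i : ℝ) * ‖iteratedDeriv i G ζ‖ * ‖iteratedDeriv (j-i) m ζ‖) * (1+a)^j :=
          mul_le_mul_of_nonneg_right hL hta.le
      _ = ∑ i ∈ Finset.range (j+1),
            ((j.choose i : ℝ) * ‖iteratedDeriv i G ζ‖ * ‖iteratedDeriv (j-i) m ζ‖) * (1+a)^j := by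
          rw [Finset.sum_mul]
      _ ≤ ∑ i ∈ Finset.range (j+1), (j.choose i : ℝ) * (Kc * C) := Finset.sum_le_sum hterm
      _ = 2^j * (Kc * C) := by rw [← Finset.sum_mul, hsum2]
      _ ≤ C' * C := by
          have h2j : (2:ℝ)^j ≤ 2^J := pow_le_pow_right₀ one_le_two hj
          have hx : (0:ℝ) ≤ (1+β/4)^J * KG * KmA :=
            mul_nonneg (mul_nonneg (pow_nonneg (by linarith) J) hKG0) hKmA0
          calc (2:ℝ)^j * (Kc * C) ≤ 2^J * (Kc * C) :=
                mul_le_mul_of_nonneg_right h2j (mul_nonneg hKc0 hC)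
            _ ≤ 2^J * ((((1+β/4)^J * KG * KmA) + Kc) * C) := by
                apply mul_le_mul_of_nonneg_left ?_ (by positivity)
                apply mul_le_mul_of_nonneg_right ?_ hC
                linarith
            _ = C' * C := by rw [hC'def]; ring
end
end

section
/- Let β > 0, u ∈ ℝ, τ ∈ [0,∞), and let J be a positive integer. For every ζ in the strip S_β the complex numbers ζ²+β² and ζ²+β²+1 have strictly positive real part, so the function m(ζ) = (ζ²+β²)^{−iu−τ} · (ζ²+β²+1)^{τ}, defined using principal branch complex powers, is well defined, holomorphic and even on S_β. Moreover there exists a constant C = C(β,u,τ,J) such that |m^{(j)}(ζ)| ≤ C · max(|ζ²+β²|^{−τ−j}, |ζ|^{−j}) for all ζ ∈ S_β and all j ∈ {0, 1, …, J}; that is, m belongs to H(S_β;J,τ). (This is the example in Remark 4.2 of the paper, the multiplier of the operator 𝓛^{−iu−τ}(𝓛+I)^{τ} when b = β².) -/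
noncomputable section

open Metric Complex

lemma cauchy_bound_s5 {f : ℂ → ℂ} {c : ℂ} {r M : ℝ} (hr : 0 < r)
    (hf : DifferentiableOn ℂ f (Metric.closedBall c r))
    (hM : ∀ z ∈ Metric.closedBall c r, ‖f z‖ ≤ M) (j : ℕ) :
    ‖iteratedDeriv j f c‖ ≤ j.factorial * M / r ^ j := by
  have hM0 : 0 ≤ M := (norm_nonneg _).trans (hM c (mem_closedBall_self hr.le))
  set R : NNReal := ⟨r, hr.le⟩ with hRdef
  have hRr : (R : ℝ) = r := rfl
  have hp : HasFPowerSeriesOnBall f (cauchyPowerSeries f c R) c R := by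
    apply DifferentiableOn.hasFPowerSeriesOnBall _ (by exact_mod_cast hr)
    rwa [hRr]
  have h2 := hp.factorial_smul (y := (1 : ℂ)) j
  have h1 : iteratedDeriv j f c = iteratedFDeriv ℂ j f c (fun _ => 1) :=
    iteratedDeriv_eq_iteratedFDeriv
  rw [h1, ← h2]
  have hnorm : ‖(j.factorial : ℕ) • (cauchyPowerSeries f c R j fun _ => (1:ℂ))‖
      = j.factorial * ‖cauchyPowerSeries f c R j fun _ => (1:ℂ)‖ := by
    rw [nsmul_eq_mul]
    push_cast
    rw [norm_mul]
    simp
  rw [hnorm]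
  have happ : ‖cauchyPowerSeries f c R j fun _ => (1:ℂ)‖ ≤ ‖cauchyPowerSeries f c R j‖ := by
    have h := (cauchyPowerSeries f c R j).le_opNorm (fun _ => (1:ℂ))
    simpa using h
  have hcont : Continuous fun θ : ℝ => ‖f (circleMap c r θ)‖ := by
    apply Continuous.norm
    exact hf.continuousOn.comp_continuous (continuous_circleMap c r)
      (fun θ => circleMap_mem_closedBall c hr.le θ)
  have hint : (∫ θ : ℝ in (0)..2 * Real.pi, ‖f (circleMap c r θ)‖) ≤ 2 * Real.pi * M := by
    have : (∫ θ : ℝ in (0)..2 * Real.pi, ‖f (circleMap c r θ)‖)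
        ≤ ∫ _ : ℝ in (0)..2 * Real.pi, M := by
      apply intervalIntegral.integral_mono_on Real.two_pi_pos.le
        (hcont.intervalIntegrable _ _) (intervalIntegrable_const)
      intro θ _
      exact hM _ (circleMap_mem_closedBall c hr.le θ)
    simpa [mul_comm] using this
  have hps := norm_cauchyPowerSeries_le f c r j
  have hbound : ‖cauchyPowerSeries f c R j‖ ≤ M * (r⁻¹) ^ j := by
    refine (norm_cauchyPowerSeries_le f c R j).trans ?_
    rw [hRr, abs_of_pos hr]
    gcongr
    calc (2 * Real.pi)⁻¹ * ∫ θ : ℝ in (0)..2 * Real.pi, ‖f (circleMap c r θ)‖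
        ≤ (2 * Real.pi)⁻¹ * (2 * Real.pi * M) := by
          apply mul_le_mul_of_nonneg_left hint (by positivity)
      _ = M := by field_simp
  calc (j.factorial : ℝ) * ‖cauchyPowerSeries f c R j fun _ => (1:ℂ)‖
      ≤ (j.factorial : ℝ) * (M * (r⁻¹) ^ j) := by
        gcongr
        exact happ.trans hbound
    _ = j.factorial * M / r ^ j := by rw [inv_pow]; ring

lemma not_slit (c : ℝ) (hc : 0 < c) (z : ℂ) (h : z ^ 2 + (c : ℂ) ∉ Complex.slitPlane) :
    z.re = 0 ∧ c ≤ z.im ^ 2 := by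
  rw [Complex.mem_slitPlane_iff] at h
  push_neg at h
  have hre : (z ^ 2 + (c : ℂ)).re = z.re ^ 2 - z.im ^ 2 + c := by
    simp [pow_two, Complex.mul_re]
  have him : (z ^ 2 + (c : ℂ)).im = 2 * z.re * z.im := by
    simp [pow_two, Complex.mul_im]
    ring
  obtain ⟨h1, h2⟩ := h
  rw [hre] at h1
  rw [him] at h2
  have hz : z.re = 0 := by
    by_contra hre0
    have : z.im = 0 := by
      rcases mul_eq_zero.1 h2 with h | h
      · rcases mul_eq_zero.1 h with h | h
        · norm_num at h
        · exact absurd h hre0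
      · exact h
    rw [this] at h1
    nlinarith
  refine ⟨hz, ?_⟩
  rw [hz] at h1
  nlinarith

lemma dist_lb {β : ℝ} {ζ z : ℂ} (hζ : |ζ.im| < β) (hz : z.re = 0) (hz2 : β ^ 2 ≤ z.im ^ 2) :
    Real.sqrt (ζ.re ^ 2 + (β - |ζ.im|) ^ 2) ≤ ‖ζ - z‖ := by
  rw [Complex.norm_def, Complex.normSq_apply]
  apply Real.sqrt_le_sqrt
  have h1 : β - |ζ.im| ≤ |ζ.im - z.im| := by
    have hb : β ≤ |z.im| := by
      nlinarith [abs_nonneg z.im, _root_.sq_abs z.im, abs_nonneg ζ.im]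
    calc β - |ζ.im| ≤ |z.im| - |ζ.im| := by linarith
      _ ≤ |z.im - ζ.im| := abs_sub_abs_le_abs_sub _ _
      _ = |ζ.im - z.im| := abs_sub_comm _ _
  have h0 : 0 ≤ β - |ζ.im| := by linarith
  have h2 : (β - |ζ.im|) ^ 2 ≤ (ζ.im - z.im) ^ 2 := by
    nlinarith [_root_.sq_abs (ζ.im - z.im)]
  simp [Complex.sub_re, Complex.sub_im, hz]
  nlinarith [sq_nonneg (ζ.re)]

lemma arith (β τ : ℝ) (hβ : 0 < β) (hτ : 0 ≤ τ) (j : ℕ)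
    (aw az r : ℝ) (hawpos : 0 < aw) (haz : 0 ≤ az) (hr : 0 < r)
    (h6 : az ≤ 2*β → aw ≤ (4 + 2/β + 6*β) * r ∧ aw ≤ 5*β^2)
    (h7 : 2*β < az → β/2 ≤ r ∧ az ≤ 4*r) :
    ((aw+4) ^ τ / aw ^ τ) * min (aw ^ (τ + (j:ℝ))) (az ^ j)
      ≤ ((5*β^2+4) ^ τ + 5 ^ τ) * ((4 + 2/β + 6*β) * r) ^ j := by
  set G : ℝ := 4 + 2/β + 6*β with hGdef
  have hG4 : (4:ℝ) ≤ G := by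
    have h1 : 0 < 2/β := by positivity
    simp only [hGdef]
    nlinarith
  have hG0 : 0 < G := by linarith
  have hGr : 0 < G * r := by positivity
  have hawt : (0:ℝ) < aw ^ τ := Real.rpow_pos_of_pos hawpos τ
  have hsplit : aw ^ (τ + (j:ℝ)) = aw ^ τ * aw ^ j := by
    rw [Real.rpow_add hawpos, Real.rpow_natCast]
  have hBpos : (0:ℝ) ≤ (5*β^2+4) ^ τ := Real.rpow_nonneg (by positivity) τ
  have h5pos : (0:ℝ) ≤ (5:ℝ) ^ τ := Real.rpow_nonneg (by norm_num) τ
  have hcollapse : ((aw+4) ^ τ / aw ^ τ) * (aw ^ τ * aw ^ j) = (aw+4) ^ τ * aw ^ j := by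
    field_simp
  rcases le_or_gt az (2*β) with hcase | hcase
  · obtain ⟨hA, hB⟩ := h6 hcase
    calc ((aw+4) ^ τ / aw ^ τ) * min (aw ^ (τ + (j:ℝ))) (az ^ j)
        ≤ ((aw+4) ^ τ / aw ^ τ) * (aw ^ τ * aw ^ j) := by
          apply mul_le_mul_of_nonneg_left _ (by positivity)
          rw [← hsplit]; exact min_le_left _ _
      _ = (aw+4) ^ τ * aw ^ j := hcollapse
      _ ≤ (5*β^2+4) ^ τ * (G*r) ^ j := by
          apply mul_le_mul (Real.rpow_le_rpow (by positivity) (by linarith) hτ)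
            (pow_le_pow_left₀ hawpos.le hA j) (by positivity) hBpos
      _ ≤ ((5*β^2+4) ^ τ + 5 ^ τ) * (G*r) ^ j := by
          apply mul_le_mul_of_nonneg_right (by linarith) (by positivity)
  · obtain ⟨hg, ha4⟩ := h7 hcase
    have haG : az ≤ G * r := by nlinarith
    rcases le_or_gt 1 aw with h1 | h1
    · have hq : (aw+4) ^ τ / aw ^ τ = ((aw+4)/aw) ^ τ :=
        (Real.div_rpow (by positivity) hawpos.le τ).symm
      have hq2 : (aw+4)/aw ≤ 5 := by rw [div_le_iff₀ hawpos]; nlinarith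
      calc ((aw+4) ^ τ / aw ^ τ) * min (aw ^ (τ + (j:ℝ))) (az ^ j)
          ≤ ((aw+4)/aw) ^ τ * az ^ j := by
            rw [← hq]
            exact mul_le_mul_of_nonneg_left (min_le_right _ _) (by positivity)
        _ ≤ (5:ℝ) ^ τ * (G*r) ^ j := by
            apply mul_le_mul (Real.rpow_le_rpow (by positivity) hq2 hτ)
              (pow_le_pow_left₀ haz haG j) (by positivity)
              h5pos
        _ ≤ ((5*β^2+4) ^ τ + 5 ^ τ) * (G*r) ^ j := by
            apply mul_le_mul_of_nonneg_right (by linarith) (by positivity)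
    · have hGr1 : 1 ≤ G * r := by
        have hbb : (2/β) * (β/2) = 1 := by field_simp
        have h2b : 2/β ≤ G := by
          have : 0 ≤ 4 + 6*β := by positivity
          simp only [hGdef]; linarith
        calc (1:ℝ) = (2/β) * (β/2) := hbb.symm
          _ ≤ G * r := mul_le_mul h2b hg (by positivity) hG0.le
      calc ((aw+4) ^ τ / aw ^ τ) * min (aw ^ (τ + (j:ℝ))) (az ^ j)
          ≤ ((aw+4) ^ τ / aw ^ τ) * (aw ^ τ * aw ^ j) := by
            apply mul_le_mul_of_nonneg_left _ (by positivity)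
            rw [← hsplit]; exact min_le_left _ _
        _ = (aw+4) ^ τ * aw ^ j := hcollapse
        _ ≤ (5:ℝ) ^ τ * 1 := by
            apply mul_le_mul (Real.rpow_le_rpow (by positivity) (by linarith) hτ)
              (pow_le_one₀ hawpos.le h1.le) (by positivity) h5pos
        _ ≤ ((5*β^2+4) ^ τ + 5 ^ τ) * (G*r) ^ j := by
            apply mul_le_mul (by linarith) (one_le_pow₀ hGr1) (by norm_num) (by positivity)

lemma far_bound {β x y az d : ℝ} (hβ : 0 < β) (hy : |y| < β)
    (haz2 : az ^ 2 = x ^ 2 + y ^ 2) (hazn : 0 ≤ az)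
    (hd2 : d ^ 2 = x ^ 2 + (β - |y|) ^ 2) (hd0 : 0 ≤ d)
    (hcase : 2*β < az) : az/2 ≤ d := by
  have hy2 : y ^ 2 ≤ β ^ 2 := by nlinarith [abs_nonneg y, _root_.sq_abs y]
  have h1 : az ^ 2/4 ≤ d ^ 2 := by nlinarith [sq_nonneg (β - |y|)]
  nlinarith

/-- The multiplier `m(ζ) = (ζ²+β²)^{-iu-τ} · (ζ²+β²+1)^τ`, with principal branch powers. -/
def mFun (β u τ : ℝ) : ℂ → ℂ := fun ζ =>
  (ζ ^ 2 + (β : ℂ) ^ 2) ^ (-(Complex.I * (u : ℂ)) - (τ : ℂ)) *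
    (ζ ^ 2 + (β : ℂ) ^ 2 + 1) ^ (τ : ℂ)

lemma mFun_diffAt {β u τ : ℝ} {z : ℂ} (h1 : z ^ 2 + (β:ℂ) ^ 2 ∈ Complex.slitPlane)
    (h2 : z ^ 2 + (β:ℂ) ^ 2 + 1 ∈ Complex.slitPlane) :
    DifferentiableAt ℂ (mFun β u τ) z := by
  unfold mFun
  apply DifferentiableAt.mul
  · exact DifferentiableAt.cpow (by fun_prop) (differentiableAt_const _) h1
  · exact DifferentiableAt.cpow (by fun_prop) (differentiableAt_const _) h2

lemma mFun_norm_le {β u τ : ℝ} (hτ : 0 ≤ τ) {z : ℂ} {A : ℝ} (hA : 0 < A)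
    (hs1 : z ^ 2 + (β:ℂ) ^ 2 ∈ Complex.slitPlane)
    (hs2 : z ^ 2 + (β:ℂ) ^ 2 + 1 ∈ Complex.slitPlane)
    (hlow : A ≤ ‖z ^ 2 + (β:ℂ) ^ 2‖) :
    ‖mFun β u τ z‖ ≤ Real.exp (Real.pi * |u|) * ((A + 1)/A) ^ τ := by
  set w : ℂ := z ^ 2 + (β:ℂ) ^ 2 with hw
  have hz1 : w ≠ 0 := slitPlane_ne_zero hs1
  have hz2 : w + 1 ≠ 0 := slitPlane_ne_zero hs2
  have hawz : 0 < ‖w‖ := norm_pos_iff.mpr hz1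
  have e1 : ‖w ^ (-(Complex.I * (u:ℂ)) - (τ:ℂ))‖
      = ‖w‖ ^ (-τ) * Real.exp (Complex.arg w * u) := by
    rw [Complex.norm_cpow_of_ne_zero hz1]
    have hre : (-(Complex.I * (u:ℂ)) - (τ:ℂ)).re = -τ := by simp
    have him : (-(Complex.I * (u:ℂ)) - (τ:ℂ)).im = -u := by simp
    rw [hre, him]
    rw [mul_neg, Real.exp_neg]
    rw [div_eq_mul_inv, inv_inv]
  have e2 : ‖(w + 1) ^ (τ:ℂ)‖ = ‖w + 1‖ ^ τ := by
    rw [Complex.norm_cpow_of_ne_zero hz2]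
    simp
  have harg : Complex.arg w * u ≤ Real.pi * |u| := by
    have h1 : Complex.arg w * u ≤ |Complex.arg w * u| := le_abs_self _
    rw [abs_mul] at h1
    have h2 : |Complex.arg w| ≤ Real.pi := Complex.abs_arg_le_pi w
    nlinarith [abs_nonneg u, abs_nonneg (Complex.arg w)]
  have hnorm : ‖mFun β u τ z‖
      = ‖w‖ ^ (-τ) * Real.exp (Complex.arg w * u) * (‖w + 1‖ ^ τ) := by
    rw [show mFun β u τ z = w ^ (-(Complex.I * (u:ℂ)) - (τ:ℂ)) * (w + 1) ^ (τ:ℂ) from rfl]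
    rw [norm_mul, e1, e2]
  rw [hnorm]
  have hb1 : ‖w + 1‖ ^ τ ≤ (‖w‖ + 1) ^ τ := by
    apply Real.rpow_le_rpow (norm_nonneg _) _ hτ
    calc ‖w + 1‖ ≤ ‖w‖ + ‖1‖ := norm_add_le _ _
      _ = ‖w‖ + 1 := by simp
  have hb2 : Real.exp (Complex.arg w * u) ≤ Real.exp (Real.pi * |u|) := Real.exp_le_exp.2 harg
  have hb3 : ‖w‖ ^ (-τ) * (‖w‖ + 1) ^ τ ≤ ((A + 1)/A) ^ τ := by
    have key : ‖w‖ ^ (-τ) * (‖w‖ + 1) ^ τ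
        = ((‖w‖ + 1)/‖w‖) ^ τ := by
      rw [Real.div_rpow (by positivity) hawz.le, Real.rpow_neg (norm_nonneg _)]
      rw [div_eq_mul_inv, mul_comm]
    rw [key]
    apply Real.rpow_le_rpow (by positivity) _ hτ
    rw [div_le_div_iff₀ hawz hA]
    nlinarith
  calc ‖w‖ ^ (-τ) * Real.exp (Complex.arg w * u) * ‖w + 1‖ ^ τ
      ≤ ‖w‖ ^ (-τ) * Real.exp (Real.pi * |u|) * ((‖w‖ + 1) ^ τ) := by
        apply mul_le_mul (mul_le_mul_of_nonneg_left hb2 (by positivity)) hb1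
          (by positivity) (by positivity)
    _ = Real.exp (Real.pi * |u|) * (‖w‖ ^ (-τ) * (‖w‖ + 1) ^ τ) := by ring
    _ ≤ Real.exp (Real.pi * |u|) * ((A + 1)/A) ^ τ := by
        apply mul_le_mul_of_nonneg_left hb3 (by positivity)

lemma strip_pos_re {β : ℝ} (hβ : 0 < β) (ζ : ℂ) (hζ : |ζ.im| < β) :
    0 < (ζ ^ 2 + (β : ℂ) ^ 2).re ∧ 0 < (ζ ^ 2 + (β : ℂ) ^ 2 + 1).re := by
  have hre : (ζ ^ 2 + (β:ℂ) ^ 2).re = ζ.re ^ 2 - ζ.im ^ 2 + β ^ 2 := by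
    simp [pow_two, Complex.mul_re]
  have hy : ζ.im ^ 2 < β ^ 2 := by
    nlinarith [_root_.sq_abs ζ.im, abs_nonneg ζ.im]
  constructor
  · rw [hre]; nlinarith [sq_nonneg ζ.re]
  · rw [Complex.add_re, hre]; simp; nlinarith [sq_nonneg ζ.re]

set_option maxHeartbeats 1000000 in
theorem stmt5 (β u τ : ℝ) (hβ : 0 < β) (hτ : 0 ≤ τ) (J : ℕ) (hJ : 0 < J) :
    -- `ζ²+β²` and `ζ²+β²+1` have strictly positive real part on the strip `S_β`
    (∀ ζ : ℂ, |ζ.im| < β → 0 < (ζ ^ 2 + (β : ℂ) ^ 2).re ∧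
      0 < (ζ ^ 2 + (β : ℂ) ^ 2 + 1).re) ∧
    -- `m` is holomorphic on `S_β`
    DifferentiableOn ℂ (mFun β u τ) {ζ : ℂ | |ζ.im| < β} ∧
    -- `m` is even on `S_β`
    (∀ ζ : ℂ, |ζ.im| < β → mFun β u τ (-ζ) = mFun β u τ ζ) ∧
    -- `m ∈ H(S_β; J, τ)`: `|m⁽ʲ⁾(ζ)| ≤ C · max(|ζ²+β²|^{-τ-j}, |ζ|^{-j})` for `0 ≤ j ≤ J`
    ∃ C : ℝ, ∀ ζ : ℂ, |ζ.im| < β → ∀ j : ℕ, j ≤ J →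
      ‖iteratedDeriv j (mFun β u τ) ζ‖ *
        min (‖ζ ^ 2 + (β : ℂ) ^ 2‖ ^ (τ + (j : ℝ))) (‖ζ‖ ^ j) ≤ C := by
  refine ⟨fun ζ hζ => strip_pos_re hβ ζ hζ, ?_, fun ζ _ => by simp [mFun, neg_sq], ?_⟩
  · intro ζ hζ
    obtain ⟨h1, h2⟩ := strip_pos_re hβ ζ hζ
    exact (mFun_diffAt (Complex.mem_slitPlane_iff.2 (Or.inl h1))
      (Complex.mem_slitPlane_iff.2 (Or.inl h2))).differentiableWithinAt
  set E : ℝ := Real.exp (Real.pi * |u|) with hEdef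
  have hE0 : 0 < E := Real.exp_pos _
  set B : ℝ := (5*β^2+4) ^ τ + 5 ^ τ with hBdef
  have hB0 : 0 ≤ B := by
    have := Real.rpow_nonneg (show (0:ℝ) ≤ 5*β^2+4 by positivity) τ
    have := Real.rpow_nonneg (show (0:ℝ) ≤ 5 by norm_num) τ
    simp only [hBdef]; linarith
  set G : ℝ := 4 + 2/β + 6*β with hGdef
  have hG1 : 1 ≤ G := by
    have h1 : 0 < 2/β := by positivity
    simp only [hGdef]; nlinarith
  refine ⟨(J.factorial : ℝ) * E * B * G ^ J, ?_⟩
  intro ζ hζ j hj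
  -- setup
  have hy0 : 0 < β - |ζ.im| := by linarith
  set d : ℝ := Real.sqrt (ζ.re ^ 2 + (β - |ζ.im|) ^ 2) with hddef
  have hd0 : 0 < d := Real.sqrt_pos.2 (by positivity)
  set r : ℝ := d / 2 with hrdef
  have hr0 : 0 < r := by positivity
  have hd2 : d ^ 2 = ζ.re ^ 2 + (β - |ζ.im|) ^ 2 := Real.sq_sqrt (by positivity)
  -- distances to the imaginary rays
  have hdm : ∀ z : ℂ, z.re = 0 → β ^ 2 ≤ z.im ^ 2 → d ≤ ‖ζ - z‖ :=
    fun z hz hz2 => dist_lb hζ hz hz2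
  have hIβre : (Complex.I * (β:ℂ)).re = 0 := by simp
  have hIβim : (Complex.I * (β:ℂ)).im = β := by simp
  have hdiβ : d ≤ ‖ζ - Complex.I * β‖ :=
    hdm _ hIβre (by rw [hIβim])
  have hdiβ' : d ≤ ‖ζ + Complex.I * β‖ := by
    have := hdm (-(Complex.I * β)) (by simp [hIβre]) (by simp [hIβim])
    rwa [sub_neg_eq_add] at this
  -- slit plane membership on the closed ball
  have hslit : ∀ z ∈ closedBall ζ r,
      z ^ 2 + (β:ℂ) ^ 2 ∈ Complex.slitPlane ∧ z ^ 2 + (β:ℂ) ^ 2 + 1 ∈ Complex.slitPlane := by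
    intro z hz
    have hdist : ‖ζ - z‖ ≤ r := by
      rw [mem_closedBall, Complex.dist_eq] at hz
      rwa [norm_sub_rev]
    constructor
    · by_contra h
      have h2 : z ^ 2 + ((β^2 : ℝ) : ℂ) ∉ Complex.slitPlane := by push_cast; exact h
      obtain ⟨hz1, hz2⟩ := not_slit (β^2) (by positivity) z h2
      have := hdm z hz1 hz2
      rw [hrdef] at hdist
      linarith
    · by_contra h
      have h2 : z ^ 2 + ((β^2+1 : ℝ) : ℂ) ∉ Complex.slitPlane := by
        push_cast; rw [← add_assoc]; exact h
      obtain ⟨hz1, hz2⟩ := not_slit (β^2+1) (by positivity) z h2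
      have := hdm z hz1 (by nlinarith)
      rw [hrdef] at hdist
      linarith
  -- differentiability on the ball
  have hdiff : DifferentiableOn ℂ (mFun β u τ) (closedBall ζ r) := by
    intro z hz
    exact (mFun_diffAt (hslit z hz).1 (hslit z hz).2).differentiableWithinAt
  set aw : ℝ := ‖ζ ^ 2 + (β:ℂ) ^ 2‖ with hawdef
  set az : ℝ := ‖ζ‖ with hazdef
  have hawpos : 0 < aw :=
    norm_pos_iff.mpr (slitPlane_ne_zero (hslit ζ (mem_closedBall_self hr0.le)).1)
  have hfacζ : (ζ : ℂ) ^ 2 + (β:ℂ) ^ 2 = (ζ - Complex.I * β) * (ζ + Complex.I * β) := by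
    linear_combination (β:ℂ) ^ 2 * Complex.I_sq
  have hawfac : aw = ‖ζ - Complex.I * β‖ * ‖ζ + Complex.I * β‖ := by
    rw [hawdef, hfacζ, norm_mul]
  -- lower bound for |z²+β²| on the ball
  have hlow : ∀ z ∈ closedBall ζ r, aw / 4 ≤ ‖z ^ 2 + (β:ℂ) ^ 2‖ := by
    intro z hz
    have hdist : ‖ζ - z‖ ≤ r := by
      rw [mem_closedBall, Complex.dist_eq] at hz
      rwa [norm_sub_rev]
    have ht1 : ‖ζ - Complex.I * β‖
        ≤ ‖ζ - z‖ + ‖z - Complex.I * β‖ :=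
      norm_sub_le_norm_sub_add_norm_sub _ _ _
    have ht2 : ‖ζ + Complex.I * β‖
        ≤ ‖ζ - z‖ + ‖z + Complex.I * β‖ := by
      have : ζ + Complex.I * β = (ζ - z) + (z + Complex.I * β) := by ring
      rw [this]
      exact norm_add_le _ _
    have hfacz : (z : ℂ) ^ 2 + (β:ℂ) ^ 2 = (z - Complex.I * β) * (z + Complex.I * β) := by
      linear_combination (β:ℂ) ^ 2 * Complex.I_sq
    rw [hfacz, norm_mul, hawfac]
    have hb1 : ‖ζ - Complex.I * β‖ / 2 ≤ ‖z - Complex.I * β‖ := by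
      rw [hrdef] at hdist; linarith
    have hb2 : ‖ζ + Complex.I * β‖ / 2 ≤ ‖z + Complex.I * β‖ := by
      rw [hrdef] at hdist; linarith
    nlinarith [norm_nonneg (ζ - Complex.I * β), norm_nonneg (ζ + Complex.I * β),
      norm_nonneg (z - Complex.I * β), norm_nonneg (z + Complex.I * β)]
  -- sup bound on the ball
  have hA4 : 0 < aw / 4 := by positivity
  have hMb : ∀ z ∈ closedBall ζ r, ‖mFun β u τ z‖ ≤ E * ((aw/4 + 1)/(aw/4)) ^ τ :=
    fun z hz => mFun_norm_le hτ hA4 (hslit z hz).1 (hslit z hz).2 (hlow z hz)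
  -- Cauchy estimate
  have hder := cauchy_bound_s5 hr0 hdiff hMb j
  clear_value E B G d r aw az
  -- rewrite the sup constant
  have hMeq : E * ((aw/4 + 1)/(aw/4)) ^ τ = E * ((aw + 4) ^ τ / aw ^ τ) := by
    have h1 : (aw/4 + 1)/(aw/4) = (aw + 4)/aw := by
      field_simp
    rw [h1, Real.div_rpow (by positivity) hawpos.le]
  -- geometric facts for arith
  have haz2 : az ^ 2 = ζ.re ^ 2 + ζ.im ^ 2 := by
    rw [hazdef, Complex.sq_norm, Complex.normSq_apply]; ring
  have hyβ : ζ.im ^ 2 ≤ β ^ 2 := by nlinarith [_root_.sq_abs ζ.im, abs_nonneg ζ.im]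
  have hazn : 0 ≤ az := by rw [hazdef]; exact norm_nonneg ζ
  have h6 : az ≤ 2*β → aw ≤ G * r ∧ aw ≤ 5*β^2 := by
    intro hcase
    constructor
    · -- one of the two factors equals d
      have habs1 : ‖ζ - Complex.I * β‖ ^ 2 = ζ.re ^ 2 + (ζ.im - β) ^ 2 := by
        rw [Complex.sq_norm, Complex.normSq_apply]
        simp [Complex.sub_re, Complex.sub_im, hIβre, hIβim]
        ring
      have habs2 : ‖ζ + Complex.I * β‖ ^ 2 = ζ.re ^ 2 + (ζ.im + β) ^ 2 := by
        rw [Complex.sq_norm, Complex.normSq_apply]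
        simp [Complex.add_re, Complex.add_im, hIβre, hIβim]
        ring
      have hIβabs : ‖Complex.I * β‖ = β := by
        rw [norm_mul, Complex.norm_I, Complex.norm_real, one_mul, Real.norm_eq_abs, _root_.abs_of_pos hβ]
      have hother1 : ‖ζ - Complex.I * β‖ ≤ az + β := by
        have h := norm_add_le ζ (-(Complex.I * β))
        rw [← sub_eq_add_neg, norm_neg, hIβabs] at h
        rw [hazdef]
        exact h
      have hother2 : ‖ζ + Complex.I * β‖ ≤ az + β := by
        have h := norm_add_le ζ (Complex.I * β)
        rw [hIβabs] at h
        rw [hazdef]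
        exact h
      have hoβ : az + β ≤ 3 * β := by linarith
      rcases le_or_gt 0 ζ.im with hsign | hsign
      · have hmin : ‖ζ - Complex.I * β‖ ≤ d := by
          have heq : ‖ζ - Complex.I * β‖ ^ 2 = d ^ 2 := by
            rw [habs1, hd2, _root_.abs_of_nonneg hsign]; ring
          nlinarith [norm_nonneg (ζ - Complex.I * β)]
        have : aw ≤ d * (3 * β) := by
          rw [hawfac]
          exact mul_le_mul hmin (hother2.trans hoβ) (norm_nonneg _) hd0.le
        have hβG : 6 * β ≤ G := by
          have h1 : 0 < 2/β := by positivity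
          simp only [hGdef]; nlinarith
        calc aw ≤ d * (3*β) := this
          _ = (6*β) * r := by rw [hrdef]; ring
          _ ≤ G * r := mul_le_mul_of_nonneg_right hβG hr0.le
      · have hmin : ‖ζ + Complex.I * β‖ ≤ d := by
          have heq : ‖ζ + Complex.I * β‖ ^ 2 = d ^ 2 := by
            rw [habs2, hd2, _root_.abs_of_neg hsign]; ring
          nlinarith [norm_nonneg (ζ + Complex.I * β)]
        have : aw ≤ (3 * β) * d := by
          rw [hawfac]
          exact mul_le_mul (hother1.trans hoβ) hmin (norm_nonneg _) (by positivity)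
        have hβG : 6 * β ≤ G := by
          have h1 : 0 < 2/β := by positivity
          simp only [hGdef]; nlinarith
        calc aw ≤ (3*β) * d := this
          _ = (6*β) * r := by rw [hrdef]; ring
          _ ≤ G * r := mul_le_mul_of_nonneg_right hβG hr0.le
    · have : aw ≤ az ^ 2 + β ^ 2 := by
        have h1 : ‖ζ ^ 2 + (β:ℂ) ^ 2‖
            ≤ ‖ζ ^ 2‖ + ‖(β:ℂ) ^ 2‖ := norm_add_le _ _
        have h2 : ‖ζ ^ 2‖ = az ^ 2 := by rw [norm_pow, hazdef]
        have h3 : ‖(β:ℂ) ^ 2‖ = β ^ 2 := by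
          rw [norm_pow, Complex.norm_real, Real.norm_eq_abs, abs_of_pos hβ]
        rw [hawdef]; rw [h2, h3] at h1; exact h1
      nlinarith [norm_nonneg ζ]
  have h7 : 2*β < az → β/2 ≤ r ∧ az ≤ 4*r := by
    intro hcase
    have hdaz : az / 2 ≤ d := far_bound hβ hζ haz2 hazn hd2 hd0.le hcase
    constructor
    · rw [hrdef]; linarith
    · rw [hrdef]; linarith
  -- final computation
  have hmin0 : 0 ≤ min (aw ^ (τ + (j:ℝ))) (az ^ j) :=
    le_min (Real.rpow_nonneg hawpos.le _) (pow_nonneg hazn _)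
  rw [hGdef] at h6
  have hkey := arith β τ hβ hτ j aw az r hawpos hazn hr0 h6 h7
  rw [← hGdef, ← hBdef] at hkey
  have hrj : (0:ℝ) < r ^ j := pow_pos hr0 j
  calc ‖iteratedDeriv j (mFun β u τ) ζ‖ * min (aw ^ (τ + (j:ℝ))) (az ^ j)
      ≤ ((j.factorial : ℝ) * (E * ((aw/4 + 1)/(aw/4)) ^ τ) / r ^ j)
          * min (aw ^ (τ + (j:ℝ))) (az ^ j) := mul_le_mul_of_nonneg_right hder hmin0
    _ = (j.factorial : ℝ) * (E * (((aw + 4) ^ τ / aw ^ τ)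
          * min (aw ^ (τ + (j:ℝ))) (az ^ j))) / r ^ j := by rw [hMeq]; ring
    _ ≤ (j.factorial : ℝ) * (E * (B * (G * r) ^ j)) / r ^ j := by
        apply (div_le_div_iff_of_pos_right hrj).2
        exact mul_le_mul_of_nonneg_left (mul_le_mul_of_nonneg_left hkey hE0.le)
          (Nat.cast_nonneg _)
    _ = (j.factorial : ℝ) * E * B * G ^ j := by
        have hrne : (r:ℝ) ^ j ≠ 0 := hrj.ne'
        rw [mul_pow]
        field_simp
    _ ≤ (J.factorial : ℝ) * E * B * G ^ J := by
        have hG0 : (0:ℝ) ≤ G := by linarith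
        have hfj : (j.factorial : ℝ) ≤ (J.factorial : ℝ) := by
          exact_mod_cast Nat.factorial_le hj
        have h1 : (j.factorial : ℝ) * E * B ≤ (J.factorial : ℝ) * E * B :=
          mul_le_mul_of_nonneg_right (mul_le_mul_of_nonneg_right hfj hE0.le) hB0
        have h2 : G ^ j ≤ G ^ J := pow_le_pow_right₀ hG1 hj
        have hx : (0:ℝ) ≤ (j.factorial : ℝ) * E * B :=
          mul_nonneg (mul_nonneg (Nat.cast_nonneg _) hE0.le) hB0
        exact mul_le_mul h1 h2 (pow_nonneg hG0 j) (hx.trans h1)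
end
end

section
/- Let ω : ℝ → ℂ be a smooth compactly supported function and let J be a positive integer. There exists a constant C, depending only on ω and J, with the following property: for every A ≥ 0 and every function m : ℝ → ℂ of class C^J satisfying the Mihlin condition |m^{(ℓ)}(t)| ≤ A (1+|t|)^{−ℓ} for all t ∈ ℝ and 0 ≤ ℓ ≤ J, the function ω̂ ∗ m, defined by (ω̂ ∗ m)(x) = ∫_ℝ ω̂(x−s) m(s) ds where ω̂(ξ) = ∫_ℝ ω(t) e^{−iξt} dt, is of class C^J and satisfies |(ω̂ ∗ m)^{(ℓ)}(x)| ≤ C A (1+|x|)^{−ℓ} for all x ∈ ℝ and 0 ≤ ℓ ≤ J. (This is the estimate ‖ω̂ ∗ m‖_{Mih(J)} ≤ C ‖m‖_{Mih(J)} asserted in Step III of the proof of Theorem 3.5 of the paper.) -/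
open MeasureTheory

noncomputable section

/-- The Fourier transform `ω̂(ξ) = ∫ ω(t) e^{-iξt} dt` on the real line. -/
def hatR (ω : ℝ → ℂ) (ξ : ℝ) : ℂ :=
  ∫ t : ℝ, ω t * Complex.exp (-(Complex.I * (ξ : ℂ) * (t : ℂ)))

/-- The convolution `(ω̂ ∗ m)(x) = ∫ ω̂(x-s) m(s) ds`. -/
def convR (ω : ℝ → ℂ) (m : ℝ → ℂ) (x : ℝ) : ℂ := ∫ s : ℝ, hatR ω (x - s) * m s

open Real FourierTransform

lemma hatR_eq_fourier (ω : ℝ → ℂ) (ξ : ℝ) : hatR ω ξ = 𝓕 ω (ξ / (2 * π)) := by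
  rw [Real.fourier_real_eq_integral_exp_smul]
  unfold hatR
  congr 1
  ext t
  rw [smul_eq_mul, mul_comm]
  congr 2
  have hπ : (π : ℝ) ≠ 0 := Real.pi_ne_zero
  have h : -2 * π * t * (ξ / (2 * π)) = -(ξ * t) := by field_simp
  rw [h]
  push_cast
  ring

variable {ω : ℝ → ℂ}

lemma aux_int (hω : ContDiff ℝ (⊤ : ℕ∞) ω) (hsupp : HasCompactSupport ω) (k n : ℕ) :
    Integrable (fun v : ℝ ↦ ‖v‖ ^ k * ‖iteratedFDeriv ℝ n ω v‖) := by
  apply Continuous.integrable_of_hasCompactSupport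
  · exact (continuous_norm.pow k).mul
      ((hω.continuous_iteratedFDeriv (by exact_mod_cast le_top)).norm)
  · exact ((hsupp.iteratedFDeriv n).norm).mul_left

lemma fourier_decay (hω : ContDiff ℝ (⊤ : ℕ∞) ω) (hsupp : HasCompactSupport ω) (n : ℕ) :
    ∃ B : ℝ, ∀ w : ℝ, |w| ^ n * ‖𝓕 ω w‖ ≤ B := by
  obtain ⟨B, hB⟩ : ∃ B : ℝ, ∀ w : ℝ, ‖w‖ ^ n * ‖iteratedFDeriv ℝ 0 (𝓕 ω) w‖ ≤ B := by
    refine ⟨_, fun w => Real.pow_mul_norm_iteratedFDeriv_fourier_le (K := 0) (N := ⊤)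
      (hω.of_le (by exact_mod_cast le_top)) (fun k m _ _ => aux_int hω hsupp k m)
      le_rfl le_top w⟩
  exact ⟨B, fun w => by simpa [norm_iteratedFDeriv_zero] using hB w⟩

lemma hatR_decay (hω : ContDiff ℝ (⊤ : ℕ∞) ω) (hsupp : HasCompactSupport ω) (n : ℕ) :
    ∃ B : ℝ, ∀ u : ℝ, (1 + |u|) ^ n * ‖hatR ω u‖ ≤ B := by
  obtain ⟨B0, hB0⟩ := fourier_decay hω hsupp 0
  obtain ⟨Bn, hBn⟩ := fourier_decay hω hsupp n
  refine ⟨(2 * π) ^ n * (2 ^ n * (B0 + Bn)), fun u => ?_⟩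
  rw [hatR_eq_fourier]
  set v := u / (2 * π) with hv
  have hπ : (0:ℝ) < 2 * π := by positivity
  have h2π : (1:ℝ) ≤ 2 * π := by nlinarith [Real.pi_gt_three]
  have hu : |u| = 2 * π * |v| := by
    rw [hv, abs_div, abs_of_pos hπ]; field_simp
  have h1 : (1 + |u|) ≤ 2 * π * (1 + |v|) := by
    rw [hu]; nlinarith [abs_nonneg v]
  have hF0 : ‖𝓕 ω v‖ ≤ B0 := by simpa using hB0 v
  have hFn : |v| ^ n * ‖𝓕 ω v‖ ≤ Bn := hBn v
  have hnorm : (0:ℝ) ≤ ‖𝓕 ω v‖ := norm_nonneg _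
  have h2 : (1 + |v|) ^ n * ‖𝓕 ω v‖ ≤ 2 ^ n * (B0 + Bn) := by
    have hmax : (1 + |v|) ≤ 2 * max 1 |v| := by
      rcases le_total (|v|) 1 with h | h
      · calc 1 + |v| ≤ 2 := by linarith
          _ ≤ 2 * max 1 |v| := by nlinarith [le_max_left 1 |v|]
      · calc 1 + |v| ≤ 2 * |v| := by linarith
          _ ≤ 2 * max 1 |v| := by nlinarith [le_max_right 1 |v|]
    have hmaxpow : max 1 |v| ^ n ≤ 1 + |v| ^ n := by
      rcases le_total (|v|) 1 with h | h
      · rw [max_eq_left h, one_pow]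
        nlinarith [pow_nonneg (abs_nonneg v) n]
      · rw [max_eq_right h]
        nlinarith []
    calc (1 + |v|) ^ n * ‖𝓕 ω v‖ ≤ (2 * max 1 |v|) ^ n * ‖𝓕 ω v‖ := by
          apply mul_le_mul_of_nonneg_right _ hnorm
          exact pow_le_pow_left₀ (by positivity) hmax n
      _ = 2 ^ n * (max 1 |v| ^ n * ‖𝓕 ω v‖) := by rw [mul_pow]; ring
      _ ≤ 2 ^ n * ((1 + |v| ^ n) * ‖𝓕 ω v‖) := by
          apply mul_le_mul_of_nonneg_left _ (by positivity)
          exact mul_le_mul_of_nonneg_right hmaxpow hnorm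
      _ = 2 ^ n * (‖𝓕 ω v‖ + |v| ^ n * ‖𝓕 ω v‖) := by ring
      _ ≤ 2 ^ n * (B0 + Bn) := by
          apply mul_le_mul_of_nonneg_left _ (by positivity)
          exact add_le_add hF0 hFn
  calc (1 + |u|) ^ n * ‖𝓕 ω v‖ ≤ (2 * π * (1 + |v|)) ^ n * ‖𝓕 ω v‖ := by
        apply mul_le_mul_of_nonneg_right _ hnorm
        exact pow_le_pow_left₀ (by positivity) h1 n
    _ = (2 * π) ^ n * ((1 + |v|) ^ n * ‖𝓕 ω v‖) := by rw [mul_pow]; ring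
    _ ≤ (2 * π) ^ n * (2 ^ n * (B0 + Bn)) := by
        apply mul_le_mul_of_nonneg_left h2 (by positivity)

lemma hatR_continuous (hω : ContDiff ℝ (⊤ : ℕ∞) ω) (hsupp : HasCompactSupport ω) :
    Continuous (hatR ω) := by
  have h : Continuous (𝓕 ω) := by
    have := Real.contDiff_fourier (f := ω) (N := 0)
      (fun n hn => by
        have : n = 0 := by exact_mod_cast Nat.le_zero.mp (by exact_mod_cast hn)
        subst this
        simpa using aux_int hω hsupp 0 0)
    exact this.continuous
  have : hatR ω = fun u => 𝓕 ω (u / (2 * π)) := funext (hatR_eq_fourier ω)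
  rw [this]
  exact h.comp (continuous_id.div_const _)

lemma hatR_weight_integrable (hω : ContDiff ℝ (⊤ : ℕ∞) ω) (hsupp : HasCompactSupport ω)
    (n : ℕ) : Integrable (fun u : ℝ ↦ ‖hatR ω u‖ * (1 + |u|) ^ n) := by
  obtain ⟨B, hB⟩ := hatR_decay hω hsupp (n + 2)
  have hBpos : 0 ≤ B := le_trans (by positivity) (hB 0)
  apply Integrable.mono' ((integrable_inv_one_add_sq).const_mul B)
  · exact ((hatR_continuous hω hsupp).norm.mul
      ((continuous_const.add continuous_abs).pow n)).aestronglyMeasurable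
  · filter_upwards with u
    have h1 : (0:ℝ) < 1 + |u| := by positivity
    have h2 : 1 + u ^ 2 ≤ (1 + |u|) ^ 2 := by nlinarith [abs_nonneg u, sq_abs u]
    have h3 : (0:ℝ) < 1 + u ^ 2 := by positivity
    rw [Real.norm_eq_abs, abs_of_nonneg (by positivity)]
    have key : (‖hatR ω u‖ * (1 + |u|) ^ n) * (1 + u ^ 2) ≤ B := by
      calc (‖hatR ω u‖ * (1 + |u|) ^ n) * (1 + u ^ 2)
          ≤ (‖hatR ω u‖ * (1 + |u|) ^ n) * (1 + |u|) ^ 2 := by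
            apply mul_le_mul_of_nonneg_left h2 (by positivity)
        _ = (1 + |u|) ^ (n + 2) * ‖hatR ω u‖ := by ring
        _ ≤ B := hB u
    calc ‖hatR ω u‖ * (1 + |u|) ^ n
        = (‖hatR ω u‖ * (1 + |u|) ^ n) * (1 + u ^ 2) * (1 + u ^ 2)⁻¹ := by
          field_simp
      _ ≤ B * (1 + u ^ 2)⁻¹ := by
          apply mul_le_mul_of_nonneg_right key (by positivity)

lemma hatR_integrable (hω : ContDiff ℝ (⊤ : ℕ∞) ω) (hsupp : HasCompactSupport ω) :
    Integrable (hatR ω) := by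
  apply Integrable.mono' (hatR_weight_integrable hω hsupp 0)
  · exact (hatR_continuous hω hsupp).aestronglyMeasurable
  · filter_upwards with u; simp

lemma conv_key (g : ℝ → ℂ) (hgc : Continuous g) (hgi : Integrable g) :
    ∀ (n : ℕ) (m : ℝ → ℂ) (A : ℝ), ContDiff ℝ (n : ℕ∞) m →
    (∀ ℓ : ℕ, ℓ ≤ n → ∀ t : ℝ, ‖iteratedDeriv ℓ m t‖ ≤ A) →
    ContDiff ℝ (n : ℕ∞) (fun x : ℝ ↦ ∫ u : ℝ, g u * m (x - u)) ∧
    ∀ ℓ : ℕ, ℓ ≤ n → ∀ x : ℝ, iteratedDeriv ℓ (fun x : ℝ ↦ ∫ u : ℝ, g u * m (x - u)) x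
        = ∫ u : ℝ, g u * iteratedDeriv ℓ m (x - u) := by
  intro n
  induction n with
  | zero =>
    intro m A hm hA
    have hmc : Continuous m := hm.continuous
    constructor
    · rw [show ((0:ℕ):ℕ∞) = 0 by norm_cast, show ((0:ℕ∞):WithTop ℕ∞) = 0 by norm_cast]
      rw [contDiff_zero]
      apply continuous_of_dominated (bound := fun u => ‖g u‖ * A)
      · intro x
        exact (hgc.mul (hmc.comp (continuous_const.sub continuous_id))).aestronglyMeasurable
      · intro x
        filter_upwards with u
        rw [norm_mul]
        exact mul_le_mul_of_nonneg_left (by simpa using hA 0 le_rfl (x - u)) (norm_nonneg _)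
      · exact hgi.norm.mul_const A
      · filter_upwards with u
        exact continuous_const.mul (hmc.comp (continuous_id.sub continuous_const))
    · intro ℓ hℓ x
      interval_cases ℓ
      simp [iteratedDeriv_zero]
  | succ n ih =>
    intro m A hm hA
    have hcast : (((n + 1 : ℕ) : ℕ∞) : WithTop ℕ∞) = (((n : ℕ) : ℕ∞) : WithTop ℕ∞) + 1 := by
      push_cast; ring
    have hm' : Differentiable ℝ m ∧ ContDiff ℝ (n : ℕ∞) (deriv m) := by
      rw [hcast, contDiff_succ_iff_deriv] at hm
      exact ⟨hm.1, hm.2.2⟩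
    have hA' : ∀ ℓ : ℕ, ℓ ≤ n → ∀ t : ℝ, ‖iteratedDeriv ℓ (deriv m) t‖ ≤ A := by
      intro ℓ hℓ t
      rw [← iteratedDeriv_succ']
      exact hA (ℓ + 1) (by omega) t
    obtain ⟨ihc, ihf⟩ := ih (deriv m) A hm'.2 hA'
    have hmc : Continuous m := hm.continuous
    have hm'c : Continuous (deriv m) := hm'.2.continuous
    -- derivative of the convolution
    have key : ∀ x₀ : ℝ, HasDerivAt (fun x : ℝ ↦ ∫ u : ℝ, g u * m (x - u))
        (∫ u : ℝ, g u * deriv m (x₀ - u)) x₀ := by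
      intro x₀
      have := hasDerivAt_integral_of_dominated_loc_of_deriv_le
        (F := fun (x : ℝ) (u : ℝ) => g u * m (x - u))
        (F' := fun (x : ℝ) (u : ℝ) => g u * deriv m (x - u))
        (bound := fun u => ‖g u‖ * A) (x₀ := x₀) (s := Metric.ball x₀ 1) (μ := volume) (Metric.ball_mem_nhds x₀ one_pos)
        ?_ ?_ ?_ ?_ ?_ ?_
      · exact this.2
      · filter_upwards with x
        exact (hgc.mul (hmc.comp (continuous_const.sub continuous_id))).aestronglyMeasurable
      · apply Integrable.mono' (hgi.norm.mul_const A)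
        · exact (hgc.mul (hmc.comp (continuous_const.sub continuous_id))).aestronglyMeasurable
        · filter_upwards with u
          rw [norm_mul]
          exact mul_le_mul_of_nonneg_left (by simpa using hA 0 (by omega) (x₀ - u))
            (norm_nonneg _)
      · exact (hgc.mul (hm'c.comp (continuous_const.sub continuous_id))).aestronglyMeasurable
      · filter_upwards with u
        intro x hx
        rw [norm_mul]
        refine mul_le_mul_of_nonneg_left ?_ (norm_nonneg _)
        simpa [iteratedDeriv_one] using hA 1 (by omega) (x - u)
      · exact hgi.norm.mul_const A
      · filter_upwards with u
        intro x hx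
        have h0 : HasDerivAt (fun y : ℝ => y - u) 1 x := by
          simpa using (hasDerivAt_id x).sub_const u
        have h1 := HasDerivAt.scomp x ((hm'.1 (x - u)).hasDerivAt) h0
        simpa [Function.comp] using h1.const_mul (g u)
    have hderiv : deriv (fun x : ℝ ↦ ∫ u : ℝ, g u * m (x - u))
        = fun x : ℝ ↦ ∫ u : ℝ, g u * deriv m (x - u) :=
      funext fun x₀ => (key x₀).deriv
    constructor
    · rw [hcast, contDiff_succ_iff_deriv]
      refine ⟨fun x => (key x).differentiableAt, ?_, ?_⟩
      · simp
      · rw [hderiv]; exact ihc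
    · intro ℓ hℓ x
      cases ℓ with
      | zero => simp [iteratedDeriv_zero]
      | succ k =>
        rw [iteratedDeriv_succ', hderiv, ihf k (by omega) x]
        congr 1
        ext u
        rw [← iteratedDeriv_succ']

theorem stmt9 (ω : ℝ → ℂ) (hω : ContDiff ℝ (⊤ : ℕ∞) ω) (hsupp : HasCompactSupport ω)
    (J : ℕ) (hJ : 0 < J) :
    ∃ C : ℝ, ∀ A : ℝ, 0 ≤ A → ∀ m : ℝ → ℂ, ContDiff ℝ (J : ℕ∞) m →
      -- Mihlin condition of order `J` with constant `A`
      (∀ t : ℝ, ∀ ℓ : ℕ, ℓ ≤ J → ‖iteratedDeriv ℓ m t‖ ≤ A / (1 + |t|) ^ ℓ) →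
      -- `ω̂ ∗ m` is of class `C^J` and satisfies the Mihlin condition with constant `C·A`
      ContDiff ℝ (J : ℕ∞) (convR ω m) ∧
      ∀ x : ℝ, ∀ ℓ : ℕ, ℓ ≤ J →
        ‖iteratedDeriv ℓ (convR ω m) x‖ ≤ C * A / (1 + |x|) ^ ℓ := by
  have hgc := hatR_continuous hω hsupp
  have hgi := hatR_integrable hω hsupp
  have hgw := hatR_weight_integrable hω hsupp J
  refine ⟨∫ u : ℝ, ‖hatR ω u‖ * (1 + |u|) ^ J, ?_⟩
  intro A hA m hm hmih
  have hbd : ∀ ℓ : ℕ, ℓ ≤ J → ∀ t : ℝ, ‖iteratedDeriv ℓ m t‖ ≤ A := by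
    intro ℓ hℓ t
    refine (hmih t ℓ hℓ).trans ?_
    apply div_le_self hA
    exact one_le_pow₀ (by simp [abs_nonneg] : (1:ℝ) ≤ 1 + |t|)
  have hconv : convR ω m = fun x : ℝ => ∫ u : ℝ, hatR ω u * m (x - u) := by
    funext x
    have h := integral_sub_left_eq_self (fun s : ℝ => hatR ω s * m (x - s)) volume x
    simp only [sub_sub_cancel] at h
    rw [convR, ← h]
  obtain ⟨hc, hf⟩ := conv_key (hatR ω) hgc hgi J m A hm hbd
  rw [hconv]
  refine ⟨hc, ?_⟩
  intro x ℓ hℓ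
  rw [hf ℓ hℓ x]
  have h1x : (0:ℝ) < 1 + |x| := by positivity
  have key : ∀ u : ℝ, ‖hatR ω u * iteratedDeriv ℓ m (x - u)‖
      ≤ (‖hatR ω u‖ * (1 + |u|) ^ J) * (A / (1 + |x|) ^ ℓ) := by
    intro u
    rw [norm_mul, mul_assoc]
    refine mul_le_mul_of_nonneg_left ?_ (norm_nonneg _)
    have h1u : (0:ℝ) < 1 + |u| := by positivity
    have h1xu : (0:ℝ) < 1 + |x - u| := by positivity
    have peetre : 1 + |x| ≤ (1 + |u|) * (1 + |x - u|) := by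
      have habs : |x| ≤ |u| + |x - u| := by
        calc |x| = |u + (x - u)| := by ring_nf
          _ ≤ |u| + |x - u| := abs_add_le _ _
      nlinarith [abs_nonneg u, abs_nonneg (x - u)]
    calc ‖iteratedDeriv ℓ m (x - u)‖ ≤ A / (1 + |x - u|) ^ ℓ := hmih (x - u) ℓ hℓ
      _ ≤ (1 + |u|) ^ ℓ * (A / (1 + |x|) ^ ℓ) := by
          rw [div_le_iff₀ (by positivity), mul_comm ((1 + |u|) ^ ℓ), mul_assoc,
            div_mul_eq_mul_div, le_div_iff₀ (by positivity)]
          calc A * (1 + |x|) ^ ℓ ≤ A * ((1 + |u|) * (1 + |x - u|)) ^ ℓ := by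
                apply mul_le_mul_of_nonneg_left _ hA
                exact pow_le_pow_left₀ (by positivity) peetre ℓ
            _ = A * ((1 + |u|) ^ ℓ * (1 + |x - u|) ^ ℓ) := by rw [mul_pow]
      _ ≤ (1 + |u|) ^ J * (A / (1 + |x|) ^ ℓ) := by
          apply mul_le_mul_of_nonneg_right _ (by positivity)
          exact pow_le_pow_right₀ (by simp [abs_nonneg]) hℓ
  calc ‖∫ u : ℝ, hatR ω u * iteratedDeriv ℓ m (x - u)‖
      ≤ ∫ u : ℝ, ‖hatR ω u * iteratedDeriv ℓ m (x - u)‖ := norm_integral_le_integral_norm _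
    _ ≤ ∫ u : ℝ, (‖hatR ω u‖ * (1 + |u|) ^ J) * (A / (1 + |x|) ^ ℓ) := by
        apply integral_mono_of_nonneg
        · filter_upwards with u; positivity
        · exact hgw.mul_const _
        · filter_upwards with u; exact key u
    _ = (∫ u : ℝ, ‖hatR ω u‖ * (1 + |u|) ^ J) * (A / (1 + |x|) ^ ℓ) := by
        rw [integral_mul_const]
    _ = (∫ u : ℝ, ‖hatR ω u‖ * (1 + |u|) ^ J) * A / (1 + |x|) ^ ℓ := by
        rw [mul_div_assoc]
end
end
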